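/- arXiv:1512.05087 — 7 statements merged into one kernel-verified Lean document; each statement's English description precedes it below -/
import Mathlib

section
/- A proximal dynamical system contains exactly one minimal subsystem. -/
open Topology Filter Set

theorem exists_minimal_subsystem
    {G X : Type*} [Group G] [TopologicalSpace G] [MetricSpace X] [CompactSpace X] [Nonempty X] [MulAction G X]
    [ContinuousSMul G X] :
    ∃ M : Set X, M.Nonempty ∧ IsClosed M ∧ (∀ (g : G), ∀ x ∈ M, g • x ∈ M) ∧
      (∀ N ⊆ M, N.Nonempty → IsClosed N → (∀ (g : G), ∀ x ∈ N, g • x ∈ N) → N = M) := by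
  set S : Set (Set X) := {A | A.Nonempty ∧ IsClosed A ∧ ∀ (g : G), ∀ x ∈ A, g • x ∈ A} with hS
  have H : ∀ c ⊆ S, IsChain (· ⊆ ·) c → c.Nonempty → ∃ lb ∈ S, ∀ s ∈ c, lb ⊆ s := by
    intro c hcS hchain hcne
    refine ⟨⋂₀ c, ⟨?_, ?_, ?_⟩, fun s hs => sInter_subset_of_mem hs⟩
    · haveI : Nonempty c := hcne.to_subtype
      haveI : IsRefl (Set X) (flip fun x1 x2 => x1 ⊆ x2) := ⟨fun _ => Set.Subset.refl _⟩
      exact IsCompact.nonempty_sInter_of_directed_nonempty_isCompact_isClosed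
        (hchain.symm.directedOn) (fun U hU => (hcS hU).1)
        (fun U hU => (hcS hU).2.1.isCompact) (fun U hU => (hcS hU).2.1)
    · exact isClosed_sInter fun U hU => (hcS hU).2.1
    · intro g x hx
      exact fun U hU => (hcS hU).2.2 g x (hx U hU)
  obtain ⟨M, -, hMS, hmin⟩ := zorn_superset_nonempty S H univ
    ⟨univ_nonempty, isClosed_univ, fun _ _ _ => mem_univ _⟩
  exact ⟨M, hMS.1, hMS.2.1, hMS.2.2, fun N hNM hN1 hN2 hN3 => le_antisymm hNM (hmin ⟨hN1, hN2, hN3⟩ hNM)⟩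

/-- A proximal dynamical system contains exactly one minimal subsystem. -/
theorem proximal_unique_minimal_subsystem
    {G X : Type*} [Group G] [TopologicalSpace G] [IsTopologicalGroup G]
    [MetricSpace X] [CompactSpace X] [Nonempty X] [MulAction G X] [ContinuousSMul G X]
    (hprox : ∀ x y : X, ∃ z : X, ∃ gs : ℕ → G,
      Tendsto (fun n => gs n • x) atTop (𝓝 z) ∧ Tendsto (fun n => gs n • y) atTop (𝓝 z)) :
    ∃! M : Set X, M.Nonempty ∧ IsClosed M ∧ (∀ (g : G), ∀ x ∈ M, g • x ∈ M) ∧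
      (∀ N ⊆ M, N.Nonempty → IsClosed N → (∀ (g : G), ∀ x ∈ N, g • x ∈ N) → N = M) := by
  obtain ⟨M, hM⟩ := exists_minimal_subsystem (G := G) (X := X)
  refine ⟨M, hM, ?_⟩
  rintro M' ⟨⟨y, hy⟩, hM'cl, hM'inv, hM'min⟩
  obtain ⟨x, hx⟩ := hM.1
  obtain ⟨z, gs, hzx, hzy⟩ := hprox x y
  have hzM : z ∈ M := hM.2.1.mem_of_tendsto hzx
    (Eventually.of_forall fun n => hM.2.2.1 (gs n) x hx)
  have hzM' : z ∈ M' := hM'cl.mem_of_tendsto hzy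
    (Eventually.of_forall fun n => hM'inv (gs n) y hy)
  have h1 : M' ∩ M = M := hM.2.2.2 _ inter_subset_right ⟨z, hzM', hzM⟩
    (hM'cl.inter hM.2.1) (fun g x ⟨h1, h2⟩ => ⟨hM'inv g x h1, hM.2.2.1 g x h2⟩)
  have h2 : M' ∩ M = M' := hM'min _ inter_subset_left ⟨z, hzM', hzM⟩
    (hM'cl.inter hM.2.1) (fun g x ⟨h1, h2⟩ => ⟨hM'inv g x h1, hM.2.2.1 g x h2⟩)
  rw [← h1, h2]
end

section
/- A minimal proximal dynamical system admits no endomorphisms other than the identity. -/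
open Topology Filter Set

/-- A minimal proximal dynamical system admits no endomorphisms other than the identity. -/
theorem minimal_proximal_no_endomorphisms
    {G X : Type*} [Group G] [TopologicalSpace G] [IsTopologicalGroup G]
    [MetricSpace X] [CompactSpace X] [Nonempty X] [MulAction G X] [ContinuousSMul G X]
    (hmin : ∀ x : X, Dense (Set.range fun g : G => g • x))
    (hprox : ∀ x y : X, ∃ z : X, ∃ gs : ℕ → G,
      Tendsto (fun n => gs n • x) atTop (𝓝 z) ∧ Tendsto (fun n => gs n • y) atTop (𝓝 z))
    (φ : X → X) (hφcont : Continuous φ) (hφequiv : ∀ (g : G) (x : X), φ (g • x) = g • φ x) :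
    φ = id := by
  obtain ⟨x⟩ := (inferInstance : Nonempty X)
  obtain ⟨z, gs, h1, h2⟩ := hprox x (φ x)
  have hz : φ z = z := by
    have hφz : Tendsto (fun n => φ (gs n • x)) atTop (𝓝 (φ z)) :=
      (hφcont.tendsto z).comp h1
    simp_rw [hφequiv] at hφz
    exact tendsto_nhds_unique hφz h2
  funext y
  have hs : IsClosed {w : X | φ w = w} := isClosed_eq hφcont continuous_id
  have hsub : Set.range (fun g : G => g • z) ⊆ {w : X | φ w = w} := by
    rintro _ ⟨g, rfl⟩
    simp [hφequiv, hz]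
  have hcl : closure (Set.range (fun g : G => g • z)) ⊆ {w : X | φ w = w} :=
    closure_minimal hsub hs
  have hy : y ∈ closure (Set.range (fun g : G => g • z)) := by
    rw [(hmin z).closure_eq]; trivial
  exact hcl hy
end

section
/- A dynamical system (X,G) is strongly proximal if and only if the induced system on the space M(X) of Borel probability measures (with the weak* topology) is proximal. In particular, every strongly proximal system is proximal. -/
open MeasureTheory Filter Topology Set
open scoped ENNReal NNReal

/-- The point mass `δ_x` as a probability measure. -/
noncomputable def diracPM {X : Type*} [MeasurableSpace X] (x : X) : ProbabilityMeasure X :=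
  ⟨MeasureTheory.Measure.dirac x, inferInstance⟩

/-- The induced action of `g` on the space of probability measures. -/
noncomputable def smulPM {G X : Type*} [Group G] [TopologicalSpace X] [MeasurableSpace X]
    [BorelSpace X] [MulAction G X] [ContinuousConstSMul G X]
    (g : G) (μ : ProbabilityMeasure X) : ProbabilityMeasure X :=
  μ.map (f := fun x => g • x) (continuous_const_smul g).measurable.aemeasurable

/-- The average `(μ + ν)/2` of two probability measures. -/
noncomputable def avgPM {X : Type*} [MeasurableSpace X] (μ ν : ProbabilityMeasure X) :
    ProbabilityMeasure X :=
  ⟨(2:ℝ≥0∞)⁻¹ • μ.toMeasure + (2:ℝ≥0∞)⁻¹ • ν.toMeasure, by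
    constructor; simp [ENNReal.inv_two_add_inv_two]⟩

lemma avgPM_comm {X : Type*} [MeasurableSpace X] (μ ν : ProbabilityMeasure X) :
    avgPM μ ν = avgPM ν μ := by
  apply Subtype.ext; simp [avgPM, add_comm]

lemma diracPM_eq_diracProba {X : Type*} [MeasurableSpace X] (x : X) :
    diracPM x = diracProba x := rfl

lemma smulPM_avg {G X : Type*} [Group G] [TopologicalSpace X] [MeasurableSpace X]
    [BorelSpace X] [MulAction G X] [ContinuousConstSMul G X]
    (g : G) (μ ν : ProbabilityMeasure X) :
    smulPM g (avgPM μ ν) = avgPM (smulPM g μ) (smulPM g ν) := by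
  apply Subtype.ext
  have hm : Measurable (fun x : X => g • x) := (continuous_const_smul g).measurable
  show Measure.map _ _ = _
  simp only [avgPM, ProbabilityMeasure.coe_mk, smulPM]
  show _ = (2:ℝ≥0∞)⁻¹ • Measure.map _ _ + (2:ℝ≥0∞)⁻¹ • Measure.map _ _
  rw [Measure.map_add _ _ hm, Measure.map_smul, Measure.map_smul]

lemma smulPM_dirac {G X : Type*} [Group G] [TopologicalSpace X] [MeasurableSpace X]
    [BorelSpace X] [MulAction G X] [ContinuousConstSMul G X] [T1Space X]
    (g : G) (x : X) : smulPM g (diracPM x) = diracPM (g • x) := by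
  apply Subtype.ext
  have hm : Measurable (fun x : X => g • x) := (continuous_const_smul g).measurable
  show Measure.map _ _ = _
  simp only [diracPM, ProbabilityMeasure.coe_mk]
  exact Measure.map_dirac' hm x

/-- If the averages `(μₙ + νₙ)/2` converge weakly to a point mass `δ_x`, then already
`μₙ → δ_x` (since `δ_x` is extreme). Proved via the portmanteau open-set criterion. -/
lemma tendsto_left_of_avg_tendsto_dirac {X : Type*} [MetricSpace X] [MeasurableSpace X]
    [BorelSpace X] {μs νs : ℕ → ProbabilityMeasure X} {x : X}
    (h : Tendsto (fun n => avgPM (μs n) (νs n)) atTop (𝓝 (diracPM x))) :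
    Tendsto μs atTop (𝓝 (diracPM x)) := by
  apply MeasureTheory.tendsto_of_forall_isOpen_le_liminf
  intro G G_open
  by_cases hx : x ∈ G
  · have hop : ((diracPM x : ProbabilityMeasure X) : Measure X) G ≤
        atTop.liminf fun n => ((avgPM (μs n) (νs n)) : Measure X) G :=
      ProbabilityMeasure.le_liminf_measure_open_of_tendsto h G_open
    have hd1 : ((diracPM x : ProbabilityMeasure X) : Measure X) G = 1 := by
      simp only [diracPM, ProbabilityMeasure.coe_mk]
      exact Measure.dirac_apply_of_mem hx
    have havg : ∀ n, ((avgPM (μs n) (νs n)) : Measure X) G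
        ≤ 2⁻¹ * ((μs n : Measure X) G) + 2⁻¹ := by
      intro n
      simp only [avgPM, ProbabilityMeasure.coe_mk, Measure.add_apply, Measure.smul_apply,
        smul_eq_mul]
      have hν : ((νs n : Measure X)) G ≤ 1 :=
        prob_le_one (μ := (νs n : Measure X)) (s := G)
      calc 2⁻¹ * ((μs n : Measure X)) G + 2⁻¹ * ((νs n : Measure X)) G
          ≤ 2⁻¹ * ((μs n : Measure X)) G + 2⁻¹ * 1 :=
            add_le_add_right (mul_le_mul_right hν _) _
        _ = 2⁻¹ * ((μs n : Measure X)) G + 2⁻¹ := by rw [mul_one]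
    set L := atTop.liminf fun n => ((μs n : Measure X) G) with hL
    have hmap : atTop.liminf (fun n => 2⁻¹ * ((μs n : Measure X) G) + 2⁻¹)
        = 2⁻¹ * L + 2⁻¹ := by
      have hcont : Continuous (fun t : ℝ≥0∞ => 2⁻¹ * t + 2⁻¹) :=
        (ENNReal.continuous_const_mul (by norm_num)).add continuous_const
      have hmono : Monotone (fun t : ℝ≥0∞ => 2⁻¹ * t + 2⁻¹) := by
        intro a b hab; exact add_le_add_left (mul_le_mul_right hab _) _
      exact (hmono.map_liminf_of_continuousAt (F := atTop)
        (fun n => (μs n : Measure X) G) hcont.continuousAt).symm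
    have key : (1:ℝ≥0∞) ≤ 2⁻¹ * L + 2⁻¹ := by
      rw [← hmap]
      refine le_trans (hd1 ▸ hop) (Filter.liminf_le_liminf ?_)
      exact Eventually.of_forall havg
    have hL1 : (1:ℝ≥0∞) ≤ L := by
      have h1 : (2:ℝ≥0∞)⁻¹ * 1 + 2⁻¹ ≤ 2⁻¹ * L + 2⁻¹ := by
        rw [mul_one]; rw [show (2:ℝ≥0∞)⁻¹ + 2⁻¹ = 1 from ENNReal.inv_two_add_inv_two]
        exact key
      have h2 : (2:ℝ≥0∞)⁻¹ * 1 ≤ 2⁻¹ * L :=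
        (ENNReal.add_le_add_iff_right (by norm_num)).mp h1
      exact (ENNReal.mul_le_mul_iff_right (by norm_num) (by norm_num)).mp h2
    have hb : diracPM x G ≤ 1 := ProbabilityMeasure.apply_le_one _ _
    have haux : ((atTop.liminf fun i => μs i G : ℝ≥0) : ℝ≥0∞)
        = atTop.liminf fun i => ((μs i G : ℝ≥0) : ℝ≥0∞) := by
      refine Monotone.map_liminf_of_continuousAt (F := atTop) ENNReal.coe_mono (fun i => μs i G)
        ENNReal.continuous_coe.continuousAt ?_ ?_
      · exact IsBoundedUnder.isCoboundedUnder_ge ⟨1, by simp⟩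
      · exact ⟨0, by simp⟩
    have : (1:ℝ≥0∞) ≤ ((atTop.liminf fun i => μs i G : ℝ≥0) : ℝ≥0∞) := by
      rw [haux]
      simpa only [ProbabilityMeasure.ennreal_coeFn_eq_coeFn_toMeasure] using hL1
    calc diracPM x G ≤ 1 := hb
      _ ≤ atTop.liminf fun i => μs i G := by exact_mod_cast this
  · have : diracPM x G = 0 := by
      simp only [diracPM]
      rw [ProbabilityMeasure.coeFn_mk]
      simp [Measure.dirac_apply' x G_open.measurableSet, hx]
    rw [this]
    exact zero_le

/-- If point masses `δ_{yₙ}` converge weakly to `δ_x`, then `yₙ → x`. -/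
lemma tendsto_of_dirac_tendsto {X : Type*} [MetricSpace X] [MeasurableSpace X] [BorelSpace X]
    {y : ℕ → X} {x : X}
    (h : Tendsto (fun n => diracPM (y n)) atTop (𝓝 (diracPM x))) :
    Tendsto y atTop (𝓝 x) := by
  have h' : Tendsto (diracProba ∘ y) atTop (𝓝 (diracProba x)) := h
  have h'' : Tendsto (diracProba (X := X)) (Filter.map y atTop) (𝓝 (diracProba x)) :=
    Filter.tendsto_map'_iff.mp h'
  have := (tendsto_diracProba_iff_tendsto (Filter.map y atTop) (x := x)).mp h''
  have h3 : Tendsto (id ∘ y) atTop (𝓝 x) := Filter.tendsto_map'_iff.mpr this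
  simpa using h3

/-- `(X,G)` is strongly proximal iff `(M(X),G)` is proximal; in particular a strongly
proximal system is proximal. -/
theorem stronglyProximal_iff_measures_proximal
    {G X : Type*} [Group G] [TopologicalSpace G] [IsTopologicalGroup G]
    [MetricSpace X] [CompactSpace X] [Nonempty X] [MeasurableSpace X] [BorelSpace X]
    [MulAction G X] [ContinuousSMul G X] :
    ((∀ μ : ProbabilityMeasure X, ∃ gs : ℕ → G, ∃ x : X,
        Tendsto (fun n => smulPM (gs n) μ) atTop (𝓝 (diracPM x))) ↔
      (∀ μ ν : ProbabilityMeasure X, ∃ lam : ProbabilityMeasure X, ∃ gs : ℕ → G,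
        Tendsto (fun n => smulPM (gs n) μ) atTop (𝓝 lam) ∧
        Tendsto (fun n => smulPM (gs n) ν) atTop (𝓝 lam))) ∧
    ((∀ μ : ProbabilityMeasure X, ∃ gs : ℕ → G, ∃ x : X,
        Tendsto (fun n => smulPM (gs n) μ) atTop (𝓝 (diracPM x))) →
      (∀ p q : X, ∃ z : X, ∃ gs : ℕ → G,
        Tendsto (fun n => gs n • p) atTop (𝓝 z) ∧
        Tendsto (fun n => gs n • q) atTop (𝓝 z))) := by
  have forward : (∀ μ : ProbabilityMeasure X, ∃ gs : ℕ → G, ∃ x : X,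
      Tendsto (fun n => smulPM (gs n) μ) atTop (𝓝 (diracPM x))) →
      (∀ μ ν : ProbabilityMeasure X, ∃ lam : ProbabilityMeasure X, ∃ gs : ℕ → G,
        Tendsto (fun n => smulPM (gs n) μ) atTop (𝓝 lam) ∧
        Tendsto (fun n => smulPM (gs n) ν) atTop (𝓝 lam)) := by
    intro hSP μ ν
    obtain ⟨gs, x, hx⟩ := hSP (avgPM μ ν)
    have heq : (fun n => smulPM (gs n) (avgPM μ ν))
        = fun n => avgPM (smulPM (gs n) μ) (smulPM (gs n) ν) :=
      funext fun n => smulPM_avg (gs n) μ ν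
    rw [heq] at hx
    have hx' : Tendsto (fun n => avgPM (smulPM (gs n) ν) (smulPM (gs n) μ)) atTop
        (𝓝 (diracPM x)) := by
      simpa only [avgPM_comm] using hx
    exact ⟨diracPM x, gs, tendsto_left_of_avg_tendsto_dirac hx,
      tendsto_left_of_avg_tendsto_dirac hx'⟩
  refine ⟨⟨forward, ?_⟩, ?_⟩
  · -- M(X) proximal → strongly proximal
    intro hP μ
    obtain ⟨x0⟩ := ‹Nonempty X›
    obtain ⟨lam, gs, h1, h2⟩ := hP μ (diracPM x0)
    have h2' : Tendsto (fun n => diracPM (gs n • x0)) atTop (𝓝 lam) := by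
      simpa only [smulPM_dirac] using h2
    obtain ⟨z, -, φ, φmono, hz⟩ :=
      isCompact_univ.tendsto_subseq (x := fun n => gs n • x0) (fun n => mem_univ _)
    have hδ : Tendsto (fun n => diracPM (gs (φ n) • x0)) atTop (𝓝 (diracPM z)) := by
      have : Tendsto (diracProba ∘ ((fun n => gs n • x0) ∘ φ)) atTop (𝓝 (diracProba z)) :=
        (continuous_diracProba.tendsto z).comp hz
      exact this
    have hlam : lam = diracPM z :=
      tendsto_nhds_unique (h2'.comp φmono.tendsto_atTop) hδ
    exact ⟨fun n => gs (φ n), z, hlam ▸ h1.comp φmono.tendsto_atTop⟩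
  · -- strongly proximal → (X,G) proximal
    intro hSP p q
    obtain ⟨gs, x, hx⟩ := hSP (avgPM (diracPM p) (diracPM q))
    have heq : (fun n => smulPM (gs n) (avgPM (diracPM p) (diracPM q)))
        = fun n => avgPM (diracPM (gs n • p)) (diracPM (gs n • q)) := by
      funext n
      rw [smulPM_avg, smulPM_dirac, smulPM_dirac]
    rw [heq] at hx
    have hx' : Tendsto (fun n => avgPM (diracPM (gs n • q)) (diracPM (gs n • p))) atTop
        (𝓝 (diracPM x)) := by
      simpa only [avgPM_comm] using hx
    exact ⟨x, gs, tendsto_of_dirac_tendsto (tendsto_left_of_avg_tendsto_dirac hx),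
      tendsto_of_dirac_tendsto (tendsto_left_of_avg_tendsto_dirac hx')⟩
end

section
/- If (Q,G) is an irreducible affine dynamical system and A ⊆ Q is any nonempty closed G-invariant subset, then A contains all extreme points of Q. -/
open Topology Set Pointwise

section Aux

variable {V : Type*} [AddCommGroup V] [Module ℝ V] [TopologicalSpace V]
    [IsTopologicalAddGroup V] [ContinuousSMul ℝ V]

lemma myIsCompact_convexJoin {s t : Set V} (hs : IsCompact s) (ht : IsCompact t) :
    IsCompact (convexJoin ℝ s t) := by
  have heq : convexJoin ℝ s t =
      (fun p : ℝ × V × V => (1 - p.1) • p.2.1 + p.1 • p.2.2) '' (Icc (0:ℝ) 1 ×ˢ s ×ˢ t) := by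
    ext x
    simp only [mem_convexJoin, Set.mem_image, Set.mem_prod]
    constructor
    · rintro ⟨a, ha, b, hb, hx⟩
      rw [segment_eq_image] at hx
      obtain ⟨θ, hθ, rfl⟩ := hx
      exact ⟨(θ, a, b), ⟨hθ, ha, hb⟩, rfl⟩
    · rintro ⟨⟨θ, a, b⟩, ⟨hθ, ha, hb⟩, rfl⟩
      exact ⟨a, ha, b, hb, by rw [segment_eq_image]; exact ⟨θ, hθ, rfl⟩⟩
  rw [heq]
  exact (isCompact_Icc.prod (hs.prod ht)).image (by fun_prop)

lemma myIsCompact_convexHull_biUnion {ι : Type*} {s : Set ι} (hs : s.Finite) (K : ι → Set V)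
    (hcomp : ∀ i ∈ s, IsCompact (K i)) (hconv : ∀ i ∈ s, Convex ℝ (K i))
    (hne : ∀ i ∈ s, (K i).Nonempty) :
    IsCompact (convexHull ℝ (⋃ i ∈ s, K i)) := by
  revert hcomp hconv hne
  refine Set.Finite.induction_on _ hs (by simp) ?_
  clear hs
  intro a s ha hsf ih hcomp hconv hne
  rw [Set.biUnion_insert]
  rcases s.eq_empty_or_nonempty with rfl | ⟨j, hj⟩
  · simpa [(hconv a (mem_insert _ _)).convexHull_eq] using hcomp a (mem_insert _ _)
  · have hKa : (K a).Nonempty := hne a (mem_insert _ _)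
    have hU : (⋃ i ∈ s, K i).Nonempty := ⟨(hne j (mem_insert_of_mem _ hj)).choose,
      Set.mem_biUnion hj (hne j (mem_insert_of_mem _ hj)).choose_spec⟩
    rw [convexHull_union hKa hU]
    refine myIsCompact_convexJoin ?_ ?_
    · rw [(hconv a (mem_insert _ _)).convexHull_eq]; exact hcomp a (mem_insert _ _)
    · exact ih (fun i hi => hcomp i (mem_insert_of_mem _ hi))
        (fun i hi => hconv i (mem_insert_of_mem _ hi))
        (fun i hi => hne i (mem_insert_of_mem _ hi))

lemma myMilman [LocallyConvexSpace ℝ V] [T2Space V] {Q A : Set V}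
    (hQcomp : IsCompact Q) (hQconv : Convex ℝ Q) (hAQ : A ⊆ Q) (hAcomp : IsCompact A)
    (hQA : closure (convexHull ℝ A) = Q) :
    Q.extremePoints ℝ ⊆ A := by
  intro x hx
  have hxQ : x ∈ Q := extremePoints_subset hx
  have hAcl : closure A = A := hAcomp.isClosed.closure_eq
  rw [← hAcl]
  rw [mem_closure_iff_nhds]
  intro U hU
  -- find a convex neighborhood S of 0 with x + S ⊆ U
  obtain ⟨S, ⟨hS0, hSconv⟩, hSsub⟩ :=
    (LocallyConvexSpace.convex_basis (𝕜 := ℝ) (0 : V)).mem_iff.1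
      (((continuous_add_left x).continuousAt (x := (0:V))).preimage_mem_nhds
        (by simpa using hU))
  have h0S : (0 : V) ∈ S := mem_of_mem_nhds hS0
  set W₁ : Set V := (4⁻¹ : ℝ) • S with hW₁def
  have hW₁nhds : W₁ ∈ 𝓝 (0 : V) := by
    have := (IsUnit.smul_mem_nhds_smul_iff
      (isUnit_iff_ne_zero.2 (by norm_num : (4⁻¹:ℝ) ≠ 0)) (a := (0:V)) (s := S)).2 hS0
    simpa using this
  have hW₁conv : Convex ℝ W₁ := hSconv.smul _
  set W : Set V := W₁ ∩ -W₁ with hWdef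
  have hWnhds : W ∈ 𝓝 (0 : V) := by
    refine Filter.inter_mem hW₁nhds ?_
    have : (Neg.neg : V → V) ⁻¹' W₁ ∈ 𝓝 (0:V) :=
      (continuous_neg.continuousAt (x := (0:V))).preimage_mem_nhds (by simpa using hW₁nhds)
    exact this
  have hWconv : Convex ℝ W := hW₁conv.inter (hW₁conv.neg)
  have hWsymm : -W = W := by
    ext y
    simp only [hWdef, Set.mem_inter_iff, Set.mem_neg, neg_neg]
    tauto
  have h0W : (0 : V) ∈ W := mem_of_mem_nhds hWnhds
  -- closure W ⊆ W₁ + W₁ pointwise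
  have hclW : ∀ z ∈ closure W, ∃ u ∈ W₁, ∃ v ∈ W₁, z = u + v := by
    intro z hz
    have hnb : (fun y => z - y) ⁻¹' (interior W₁) ∈ 𝓝 z := by
      refine ((continuous_const.sub continuous_id).continuousAt (x := z)).preimage_mem_nhds ?_
      show interior W₁ ∈ 𝓝 (z - z); rw [sub_self]
      exact (isOpen_interior.mem_nhds (mem_interior_iff_mem_nhds.2 hW₁nhds))
    obtain ⟨w, hw1, hw2⟩ := mem_closure_iff_nhds.1 hz _ hnb
    exact ⟨w, hw2.1, z - w, interior_subset hw1, by abel⟩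
  -- the cover
  set C : V → Set V := fun a => (fun y => -a + y) ⁻¹' closure W with hCdef
  have hCconv : ∀ a, Convex ℝ (C a) := fun a =>
    (hWconv.closure).translate_preimage_right (-a)
  have hCclosed : ∀ a, IsClosed (C a) :=
    fun a => isClosed_closure.preimage (continuous_add_left _)
  have hCself : ∀ a : V, a ∈ C a := fun a => by
    simp only [hCdef, Set.mem_preimage, neg_add_cancel]
    exact subset_closure h0W
  have hOpen : ∀ a : V, IsOpen ((fun y => -a + y) ⁻¹' interior W) :=
    fun a => isOpen_interior.preimage (continuous_add_left _)
  obtain ⟨t, htA, htfin, htcov⟩ := hAcomp.elim_finite_subcover_image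
    (b := A) (c := fun a => (fun y => -a + y) ⁻¹' interior W)
    (fun a _ => hOpen a)
    (fun y hy => Set.mem_biUnion hy (by
      simp only [Set.mem_preimage, neg_add_cancel]
      exact mem_interior_iff_mem_nhds.2 hWnhds))
  set K : V → Set V := fun a => closure (convexHull ℝ (A ∩ C a)) with hKdef
  have hKsubQ : ∀ a, K a ⊆ Q :=
    fun a => closure_minimal (convexHull_min (fun y hy => hAQ hy.1) hQconv) hQcomp.isClosed
  have hKsubC : ∀ a, K a ⊆ C a :=
    fun a => closure_minimal (convexHull_min (fun y hy => hy.2) (hCconv a)) (hCclosed a)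
  have hKcomp : ∀ a ∈ t, IsCompact (K a) :=
    fun a _ => hQcomp.of_isClosed_subset isClosed_closure (hKsubQ a)
  have hKconv : ∀ a ∈ t, Convex ℝ (K a) := fun a _ => (convex_convexHull ℝ _).closure
  have hKne : ∀ a ∈ t, (K a).Nonempty :=
    fun a ha => ⟨a, subset_closure (subset_convexHull ℝ _ ⟨htA ha, hCself a⟩)⟩
  -- Q equals the convex hull of the union of the K a
  have hQeq : Q = convexHull ℝ (⋃ a ∈ t, K a) := by
    apply le_antisymm
    · rw [← hQA]
      refine closure_minimal (convexHull_min ?_ (convex_convexHull ℝ _))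
        (myIsCompact_convexHull_biUnion htfin K hKcomp hKconv hKne).isClosed
      intro y hy
      obtain ⟨a, ha, hya⟩ : ∃ a ∈ t, y ∈ (fun z => -a + z) ⁻¹' interior W := by
        simpa using htcov hy
      have hyCa : y ∈ A ∩ C a := ⟨hy, subset_closure (interior_subset hya)⟩
      exact subset_convexHull ℝ _ (Set.mem_biUnion ha
        (show y ∈ K a from subset_closure (subset_convexHull ℝ _ hyCa)))
    · refine convexHull_min ?_ hQconv
      exact Set.iUnion₂_subset fun a _ => hKsubQ a
  -- x is an extreme point of the hull, hence lies in some K a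
  have hxK : x ∈ ⋃ a ∈ t, K a := by
    refine extremePoints_convexHull_subset (𝕜 := ℝ) ?_
    rw [← hQeq]; exact hx
  obtain ⟨a, ha, hxa⟩ : ∃ a ∈ t, x ∈ K a := by simpa using hxK
  -- so x ∈ C a, i.e. x - a ∈ closure W; deduce a ∈ U
  have hxCa : -a + x ∈ closure W := hKsubC a hxa
  have hax : -x + a ∈ closure W := by
    have h1 : -(-a + x) ∈ Neg.neg '' closure W := ⟨_, hxCa, rfl⟩
    have h2 := image_closure_subset_closure_image (continuous_neg (G := V)) h1
    rw [Set.image_neg_eq_neg, hWsymm] at h2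
    simpa [neg_add_rev, add_comm] using h2
  obtain ⟨u, hu, v, hv, huv⟩ := hclW _ hax
  obtain ⟨su, hsu, rfl⟩ := hu
  obtain ⟨sv, hsv, rfl⟩ := hv
  have hsum : (4⁻¹:ℝ) • su + (4⁻¹:ℝ) • sv ∈ S := by
    have hmid : (2⁻¹:ℝ) • su + (2⁻¹:ℝ) • sv ∈ S :=
      hSconv hsu hsv (by norm_num) (by norm_num) (by norm_num)
    have := hSconv (a := (2⁻¹:ℝ)) (b := (2⁻¹:ℝ)) hmid h0S (by norm_num) (by norm_num)
      (by norm_num)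
    have heq : (2⁻¹:ℝ) • ((2⁻¹:ℝ) • su + (2⁻¹:ℝ) • sv) + (2⁻¹:ℝ) • (0:V)
        = (4⁻¹:ℝ) • su + (4⁻¹:ℝ) • sv := by
      rw [smul_zero, add_zero, smul_add, smul_smul, smul_smul]; norm_num
    rwa [heq] at this
  have haU : a ∈ U := by
    have : a = x + ((4⁻¹:ℝ) • su + (4⁻¹:ℝ) • sv) := by
      have : a = x + (-x + a) := by abel
      rw [this, huv]
    rw [this]
    exact hSsub hsum
  exact ⟨a, haU, htA ha⟩

end Aux

/-- In an irreducible affine dynamical system `Q`, every nonempty closed invariant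
subset `A ⊆ Q` contains all extreme points of `Q`. -/
theorem closed_invariant_subset_contains_extremePoints
    {G V : Type*} [Group G] [AddCommGroup V] [Module ℝ V] [TopologicalSpace V]
    [IsTopologicalAddGroup V] [ContinuousSMul ℝ V] [LocallyConvexSpace ℝ V]
    [TopologicalSpace.MetrizableSpace V]
    (Q : Set V) (hQcomp : IsCompact Q) (hQconv : Convex ℝ Q)
    (σ : G → V →ᵃ[ℝ] V) (hσcont : ∀ g : G, Continuous (σ g))
    (hσmul : ∀ (g h : G), ∀ v ∈ Q, σ (g * h) v = σ g (σ h v))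
    (hQinv : ∀ g : G, σ g '' Q = Q)
    (hirr : ∀ B ⊆ Q, B.Nonempty → IsClosed B → Convex ℝ B →
      (∀ g : G, σ g '' B ⊆ B) → B = Q)
    (A : Set V) (hAQ : A ⊆ Q) (hAne : A.Nonempty) (hAclosed : IsClosed A)
    (hAinv : ∀ g : G, σ g '' A ⊆ A) :
    Q.extremePoints ℝ ⊆ A := by
  set B : Set V := closure (convexHull ℝ A) with hBdef
  have hBQ : B ⊆ Q := closure_minimal (convexHull_min hAQ hQconv) hQcomp.isClosed
  have hBne : B.Nonempty := hAne.mono ((subset_convexHull ℝ A).trans subset_closure)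
  have hBconv : Convex ℝ B := (convex_convexHull ℝ A).closure
  have hBinv : ∀ g : G, σ g '' B ⊆ B := by
    intro g
    refine (image_closure_subset_closure_image (hσcont g)).trans ?_
    apply closure_mono
    rw [AffineMap.image_convexHull]
    exact convexHull_mono (hAinv g)
  have hBQ' : B = Q := hirr B hBQ hBne isClosed_closure hBconv hBinv
  have hAcomp : IsCompact A := hQcomp.of_isClosed_subset hAclosed hAQ
  exact myMilman hQcomp hQconv hAQ hAcomp hBQ'
end

section
/- If (Q,G) and (P,G) are irreducible affine dynamical systems, then there is at most one affine G-equivariant continuous map π : Q → P. In particular, the only affine endomorphism of an irreducible affine system is the identity. -/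
open Topology Set


theorem affine_hom_unique_aux
    {G V W : Type*} [Group G]
    [AddCommGroup V] [Module ℝ V] [TopologicalSpace V] [IsTopologicalAddGroup V]
    [ContinuousSMul ℝ V] [LocallyConvexSpace ℝ V] [TopologicalSpace.MetrizableSpace V]
    [AddCommGroup W] [Module ℝ W] [TopologicalSpace W] [IsTopologicalAddGroup W]
    [ContinuousSMul ℝ W] [LocallyConvexSpace ℝ W] [TopologicalSpace.MetrizableSpace W]
    (Q : Set V) (hQcomp : IsCompact Q) (hQne : Q.Nonempty) (hQconv : Convex ℝ Q)
    (σ : G → V →ᵃ[ℝ] V)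
    (hQinv : ∀ g : G, σ g '' Q = Q)
    (hQirr : ∀ B ⊆ Q, B.Nonempty → IsClosed B → Convex ℝ B →
      (∀ g : G, σ g '' B ⊆ B) → B = Q)
    (P : Set W) (hPcomp : IsCompact P) (hPconv : Convex ℝ P)
    (τ : G → W →ᵃ[ℝ] W)
    (hPirr : ∀ B ⊆ P, B.Nonempty → IsClosed B → Convex ℝ B →
      (∀ g : G, τ g '' B ⊆ B) → B = P)
    (π₁ π₂ : V → W)
    (hc1 : ContinuousOn π₁ Q) (hm1 : MapsTo π₁ Q P)
    (he1 : ∀ (g : G), ∀ v ∈ Q, π₁ (σ g v) = τ g (π₁ v))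
    (ha1 : ∀ v ∈ Q, ∀ w ∈ Q, ∀ a b : ℝ, 0 ≤ a → 0 ≤ b → a + b = 1 →
        π₁ (a • v + b • w) = a • π₁ v + b • π₁ w)
    (hc2 : ContinuousOn π₂ Q) (hm2 : MapsTo π₂ Q P)
    (he2 : ∀ (g : G), ∀ v ∈ Q, π₂ (σ g v) = τ g (π₂ v))
    (ha2 : ∀ v ∈ Q, ∀ w ∈ Q, ∀ a b : ℝ, 0 ≤ a → 0 ≤ b → a + b = 1 →
        π₂ (a • v + b • w) = a • π₂ v + b • π₂ w) :
    ∀ v ∈ Q, π₁ v = π₂ v := by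
  set π : V → W := fun x => (2⁻¹ : ℝ) • π₁ x + (2⁻¹ : ℝ) • π₂ x with hπ
  have hmπ : MapsTo π Q P := fun x hx =>
    hPconv (hm1 hx) (hm2 hx) (by norm_num) (by norm_num) (by norm_num)
  have hcπ : ContinuousOn π Q := (hc1.const_smul _).add (hc2.const_smul _)
  have haff : ∀ x ∈ Q, ∀ y ∈ Q, ∀ a b : ℝ, 0 ≤ a → 0 ≤ b → a + b = 1 →
      π (a • x + b • y) = a • π x + b • π y := by
    intro x hx y hy a b ha hb hab
    simp only [hπ, ha1 x hx y hy a b ha hb hab, ha2 x hx y hy a b ha hb hab]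
    module
  have hequiv : ∀ g : G, ∀ x ∈ Q, π (σ g x) = τ g (π x) := by
    intro g x hx
    simp only [hπ, he1 g x hx, he2 g x hx]
    rw [Convex.combo_affine_apply (by norm_num)]
  have hmemσ : ∀ g : G, ∀ x ∈ Q, σ g x ∈ Q := fun g x hx =>
    (hQinv g) ▸ mem_image_of_mem _ hx
  have himg : π '' Q = P := by
    refine hPirr (π '' Q) (image_subset_iff.2 hmπ) (hQne.image π)
      (hQcomp.image_of_continuousOn hcπ).isClosed ?_ ?_
    · rintro - ⟨x, hx, rfl⟩ - ⟨y, hy, rfl⟩ a b ha hb hab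
      exact ⟨a • x + b • y, hQconv hx hy ha hb hab, haff x hx y hy a b ha hb hab⟩
    · rintro g - ⟨-, ⟨x, hx, rfl⟩, rfl⟩
      exact ⟨σ g x, hmemσ g x hx, hequiv g x hx⟩
  obtain ⟨e, he⟩ := hPcomp.extremePoints_nonempty ⟨_, hmπ hQne.choose_spec⟩
  rw [mem_extremePoints] at he
  obtain ⟨u, hu, hue⟩ := himg ▸ he.1
  have h12 : π₁ u = π₂ u := by
    have hseg : e ∈ openSegment ℝ (π₁ u) (π₂ u) :=
      ⟨2⁻¹, 2⁻¹, by norm_num, by norm_num, by norm_num, hue⟩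
    have := he.2 (π₁ u) (hm1 hu) (π₂ u) (hm2 hu) hseg
    rw [this.1, this.2]
  have hD : {x ∈ Q | π₁ x = π₂ x} = Q := by
    refine hQirr _ (sep_subset _ _) ⟨u, hu, h12⟩ ?_ ?_ ?_
    · have h := ((hc1.sub hc2).preimage_isClosed_of_isClosed hQcomp.isClosed
        (isClosed_singleton (x := (0 : W))))
      convert h using 1
      ext x
      simp [sub_eq_zero]
    · rintro x ⟨hx, hx12⟩ y ⟨hy, hy12⟩ a b ha hb hab
      exact ⟨hQconv hx hy ha hb hab, by
        rw [ha1 x hx y hy a b ha hb hab, ha2 x hx y hy a b ha hb hab, hx12, hy12]⟩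
    · rintro g - ⟨x, ⟨hx, hx12⟩, rfl⟩
      exact ⟨hmemσ g x hx, by rw [he1 g x hx, he2 g x hx, hx12]⟩
  intro v hv
  exact ((hD.symm ▸ hv : v ∈ {x ∈ Q | π₁ x = π₂ x})).2

/-- Between two irreducible affine dynamical systems there is at most one affine
`G`-equivariant continuous map; in particular the only affine endomorphism of an
irreducible affine system is the identity. -/
theorem affine_hom_unique_between_irreducible
    {G V W : Type*} [Group G]
    [AddCommGroup V] [Module ℝ V] [TopologicalSpace V] [IsTopologicalAddGroup V]
    [ContinuousSMul ℝ V] [LocallyConvexSpace ℝ V] [TopologicalSpace.MetrizableSpace V]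
    [AddCommGroup W] [Module ℝ W] [TopologicalSpace W] [IsTopologicalAddGroup W]
    [ContinuousSMul ℝ W] [LocallyConvexSpace ℝ W] [TopologicalSpace.MetrizableSpace W]
    (Q : Set V) (hQcomp : IsCompact Q) (hQne : Q.Nonempty) (hQconv : Convex ℝ Q)
    (σ : G → V →ᵃ[ℝ] V) (hσcont : ∀ g : G, Continuous (σ g))
    (hσmul : ∀ (g h : G), ∀ v ∈ Q, σ (g * h) v = σ g (σ h v))
    (hQinv : ∀ g : G, σ g '' Q = Q)
    (hQirr : ∀ B ⊆ Q, B.Nonempty → IsClosed B → Convex ℝ B →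
      (∀ g : G, σ g '' B ⊆ B) → B = Q)
    (P : Set W) (hPcomp : IsCompact P) (hPne : P.Nonempty) (hPconv : Convex ℝ P)
    (τ : G → W →ᵃ[ℝ] W) (hτcont : ∀ g : G, Continuous (τ g))
    (hτmul : ∀ (g h : G), ∀ w ∈ P, τ (g * h) w = τ g (τ h w))
    (hPinv : ∀ g : G, τ g '' P = P)
    (hPirr : ∀ B ⊆ P, B.Nonempty → IsClosed B → Convex ℝ B →
      (∀ g : G, τ g '' B ⊆ B) → B = P) :
    -- at most one affine `G`-map `Q → P`:
    (∀ π₁ π₂ : V → W,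
      ContinuousOn π₁ Q → MapsTo π₁ Q P →
      (∀ (g : G), ∀ v ∈ Q, π₁ (σ g v) = τ g (π₁ v)) →
      (∀ v ∈ Q, ∀ w ∈ Q, ∀ a b : ℝ, 0 ≤ a → 0 ≤ b → a + b = 1 →
        π₁ (a • v + b • w) = a • π₁ v + b • π₁ w) →
      ContinuousOn π₂ Q → MapsTo π₂ Q P →
      (∀ (g : G), ∀ v ∈ Q, π₂ (σ g v) = τ g (π₂ v)) →
      (∀ v ∈ Q, ∀ w ∈ Q, ∀ a b : ℝ, 0 ≤ a → 0 ≤ b → a + b = 1 →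
        π₂ (a • v + b • w) = a • π₂ v + b • π₂ w) →
      ∀ v ∈ Q, π₁ v = π₂ v) ∧
    -- the only affine endomorphism of `Q` is the identity:
    (∀ φ : V → V,
      ContinuousOn φ Q → MapsTo φ Q Q →
      (∀ (g : G), ∀ v ∈ Q, φ (σ g v) = σ g (φ v)) →
      (∀ v ∈ Q, ∀ w ∈ Q, ∀ a b : ℝ, 0 ≤ a → 0 ≤ b → a + b = 1 →
        φ (a • v + b • w) = a • φ v + b • φ w) →
      ∀ v ∈ Q, φ v = v) := by
  constructor
  · intro π₁ π₂ hc1 hm1 he1 ha1 hc2 hm2 he2 ha2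
    exact affine_hom_unique_aux Q hQcomp hQne hQconv σ hQinv hQirr P hPcomp hPconv τ hPirr
      π₁ π₂ hc1 hm1 he1 ha1 hc2 hm2 he2 ha2
  · intro φ hc hm he ha
    exact affine_hom_unique_aux Q hQcomp hQne hQconv σ hQinv hQirr Q hQcomp hQconv σ hQirr
      φ id hc hm he ha continuousOn_id (mapsTo_id Q) (fun g v hv => rfl)
      (fun v hv w hw a b ha' hb hab => rfl)
end

section
/- The rotation system (ℤ/p, T) with Tx = x+1 is affinely prime over ℝ (i.e., has the LSW property for real-valued functions) if and only if p ∈ {2,3}, for p prime. -/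
open Real

private lemma per_cos (p : ℕ) (a b : ℤ) (h : (a : ZMod p) = b) :
    Real.cos (2*π*a/p) = Real.cos (2*π*b/p) := by
  have h0 : ((a - b : ℤ) : ZMod p) = 0 := by push_cast; rw [h]; ring
  obtain ⟨k, hk⟩ := (ZMod.intCast_zmod_eq_zero_iff_dvd _ _).mp h0
  have hbz : (a : ℤ) = b + k * p := by linear_combination hk
  have hb : (a : ℝ) = (b : ℝ) + (k : ℝ) * (p : ℝ) := by exact_mod_cast hbz
  rcases Nat.eq_zero_or_pos p with hz | hz
  · subst hz
    have hab : a = b := by omega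
    rw [hab]
  have hp' : (p:ℝ) ≠ 0 := by positivity
  rw [show 2*π*(a:ℝ)/p = 2*π*b/p + k * (2*π) by rw [hb]; field_simp,
    Real.cos_add_int_mul_two_pi]

private lemma per_sin (p : ℕ) (a b : ℤ) (h : (a : ZMod p) = b) :
    Real.sin (2*π*a/p) = Real.sin (2*π*b/p) := by
  have h0 : ((a - b : ℤ) : ZMod p) = 0 := by push_cast; rw [h]; ring
  obtain ⟨k, hk⟩ := (ZMod.intCast_zmod_eq_zero_iff_dvd _ _).mp h0
  have hbz : (a : ℤ) = b + k * p := by linear_combination hk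
  have hb : (a : ℝ) = (b : ℝ) + (k : ℝ) * (p : ℝ) := by exact_mod_cast hbz
  rcases Nat.eq_zero_or_pos p with hz | hz
  · subst hz
    have hab : a = b := by omega
    rw [hab]
  have hp' : (p:ℝ) ≠ 0 := by positivity
  rw [show 2*π*(a:ℝ)/p = 2*π*b/p + k * (2*π) by rw [hb]; field_simp,
    Real.sin_add_int_mul_two_pi]

private noncomputable def cfun (p : ℕ) : ZMod p → ℝ := fun x => Real.cos (2*π*(x.val : ℤ)/p)
private noncomputable def sfun (p : ℕ) : ZMod p → ℝ := fun x => Real.sin (2*π*(x.val : ℤ)/p)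

/-- For `p ≥ 5` the LSW property fails: all translates of `cfun p` lie in the span of
`{cfun p, sfun p, 1}`, which has dimension at most `3 < p`. -/
private lemma big_p_fails (p : ℕ) (hp : p.Prime) (hp5 : 5 ≤ p)
    (H : ∀ f : ZMod p → ℝ, (¬ ∃ c : ℝ, ∀ x : ZMod p, f x = c) →
      Submodule.span ℝ
        ((Set.range fun n : ℤ => fun x : ZMod p => f (x + (n : ZMod p))) ∪
          {fun _ : ZMod p => (1 : ℝ)}) = ⊤) : False := by
  haveI : Fact p.Prime := ⟨hp⟩
  haveI : NeZero p := ⟨hp.ne_zero⟩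
  have hπ : 0 < π := Real.pi_pos
  have hp' : (0:ℝ) < p := by positivity
  set v : Fin 3 → (ZMod p → ℝ) := ![cfun p, sfun p, fun _ => 1] with hv
  -- cfun is nonconstant
  have hnc : ¬ ∃ k : ℝ, ∀ x : ZMod p, cfun p x = k := by
    rintro ⟨k, hk⟩
    have h0 : cfun p 0 = 1 := by simp [cfun, ZMod.val_zero]
    have h1 : cfun p 1 = Real.cos (2*π/p) := by
      have hv1 : (1 : ZMod p).val = 1 := ZMod.val_one p
      simp [cfun, hv1]
    have hne : Real.cos (2*π/p) ≠ 1 := by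
      intro heq
      obtain ⟨n, hn⟩ := (Real.cos_eq_one_iff _).mp heq
      have h1' : (n : ℝ) * p = 1 := by
        field_simp at hn
        nlinarith [hn]
      have h2' : (n * p : ℤ) = 1 := by exact_mod_cast h1'
      have hd : (p : ℤ) ∣ 1 := Dvd.intro_left n h2'
      have := Int.le_of_dvd one_pos hd
      omega
    exact hne (by rw [← h1, hk 1, ← hk 0, h0])
  have htop' := H (cfun p) hnc
  have hsub : (Set.range fun n : ℤ => fun x : ZMod p => cfun p (x + (n : ZMod p))) ∪
      {fun _ : ZMod p => (1 : ℝ)} ⊆ ↑(Submodule.span ℝ (Set.range v)) := by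
    rintro g hg
    rcases hg with ⟨n, hn⟩ | hg
    · have key : (fun x : ZMod p => cfun p (x + (n : ZMod p)))
          = Real.cos (2*π*n/p) • cfun p - Real.sin (2*π*n/p) • sfun p := by
        funext x
        have hcast : ((((x + (n : ZMod p)).val : ℤ)) : ZMod p) = (((x.val : ℤ) + n : ℤ) : ZMod p) := by
          push_cast
          simp [ZMod.natCast_val, ZMod.intCast_cast, ZMod.cast_id]
        have hper := per_cos p ((x + (n : ZMod p)).val : ℤ) ((x.val : ℤ) + n) hcast
        simp only [cfun, sfun, Pi.sub_apply, Pi.smul_apply, smul_eq_mul]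
        rw [hper, show 2*π*(((x.val:ℤ) + n : ℤ):ℝ)/p = 2*π*((x.val:ℤ):ℝ)/p + 2*π*n/p by
          push_cast; field_simp, Real.cos_add]
        ring
      rw [← hn]
      show (fun x : ZMod p => cfun p (x + (n : ZMod p))) ∈ _
      rw [key]
      exact sub_mem (Submodule.smul_mem _ _ (Submodule.subset_span ⟨0, rfl⟩))
        (Submodule.smul_mem _ _ (Submodule.subset_span ⟨1, rfl⟩))
    · rw [Set.mem_singleton_iff] at hg
      subst hg
      exact Submodule.subset_span ⟨2, rfl⟩
  have htop : Submodule.span ℝ (Set.range v) = ⊤ :=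
    top_le_iff.mp (htop' ▸ Submodule.span_le.mpr hsub)
  have hle := finrank_le_of_span_eq_top htop
  rw [Module.finrank_fintype_fun_eq_card, ZMod.card] at hle
  simp [Fintype.card_fin] at hle
  omega

/-- The rotation system `(ℤ/p, x ↦ x+1)` has the linear Stone-Weierstrass property
over `ℝ` (i.e. is affinely prime over `ℝ`) iff `p = 2` or `p = 3`, for `p` prime. -/
theorem zmod_rotation_lsw_iff (p : ℕ) (hp : p.Prime) :
    (∀ f : ZMod p → ℝ, (¬ ∃ c : ℝ, ∀ x : ZMod p, f x = c) →
      Submodule.span ℝ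
        ((Set.range fun n : ℤ => fun x : ZMod p => f (x + (n : ZMod p))) ∪
          {fun _ : ZMod p => (1 : ℝ)}) = ⊤) ↔
    p = 2 ∨ p = 3 := by
  constructor
  · intro H
    by_contra hne
    push_neg at hne
    have hp5 : 5 ≤ p := by
      have h2 := hp.two_le
      have h4 : p ≠ 4 := by rintro rfl; exact absurd hp (by norm_num)
      omega
    exact (big_p_fails p hp hp5 H).elim
  · rintro (rfl | rfl) <;> intro f hf
    · -- p = 2
      have h01 : f 0 - f 1 ≠ 0 := by
        intro h
        apply hf
        refine ⟨f 0, fun x => ?_⟩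
        have hall : ∀ y : ZMod 2, y = 0 ∨ y = 1 := by decide
        rcases hall x with rfl | rfl
        · rfl
        · linarith
      rw [eq_top_iff]
      rintro g -
      have hF0 : (fun x : ZMod 2 => f (x + ((0:ℤ) : ZMod 2))) ∈
          Submodule.span ℝ ((Set.range fun n : ℤ => fun x : ZMod 2 => f (x + (n : ZMod 2))) ∪
            {fun _ : ZMod 2 => (1 : ℝ)}) := Submodule.subset_span (Or.inl ⟨0, rfl⟩)
      have hF1 : (fun x : ZMod 2 => f (x + ((1:ℤ) : ZMod 2))) ∈
          Submodule.span ℝ ((Set.range fun n : ℤ => fun x : ZMod 2 => f (x + (n : ZMod 2))) ∪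
            {fun _ : ZMod 2 => (1 : ℝ)}) := Submodule.subset_span (Or.inl ⟨1, rfl⟩)
      have hOne : (fun _ : ZMod 2 => (1:ℝ)) ∈
          Submodule.span ℝ ((Set.range fun n : ℤ => fun x : ZMod 2 => f (x + (n : ZMod 2))) ∪
            {fun _ : ZMod 2 => (1 : ℝ)}) := Submodule.subset_span (Or.inr rfl)
      have key : g = ((g 0 - g 1)/(2*(f 0 - f 1))) •
            ((fun x : ZMod 2 => f (x + ((0:ℤ) : ZMod 2))) - fun x : ZMod 2 => f (x + ((1:ℤ) : ZMod 2)))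
          + ((g 0 + g 1)/2) • (fun _ : ZMod 2 => (1:ℝ)) := by
        funext x
        have hall : ∀ y : ZMod 2, y = 0 ∨ y = 1 := by decide
        have hx := hall x
        have e00 : (0 : ZMod 2) + ((0:ℤ) : ZMod 2) = 0 := by decide
        have e01 : (0 : ZMod 2) + ((1:ℤ) : ZMod 2) = 1 := by decide
        have e10 : (1 : ZMod 2) + ((0:ℤ) : ZMod 2) = 1 := by decide
        have e11 : (1 : ZMod 2) + ((1:ℤ) : ZMod 2) = 0 := by decide
        rcases hx with rfl | rfl <;>
          simp only [Pi.add_apply, Pi.smul_apply, Pi.sub_apply, smul_eq_mul, e00, e01, e10, e11] <;>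
          field_simp <;> ring
      rw [key]
      exact Submodule.add_mem _ (Submodule.smul_mem _ _ (Submodule.sub_mem _ hF0 hF1))
        (Submodule.smul_mem _ _ hOne)
    · -- p = 3
      set u : ℝ := f 0 - f 1 with hu
      set v : ℝ := f 1 - f 2 with hv
      set w : ℝ := f 2 - f 0 with hw
      have hdet : (u - v) * (w - u) - (v - w)^2 ≠ 0 := by
        intro h
        have hw' : w = -u - v := by rw [hu, hv, hw]; ring
        rw [hw'] at h
        have hq : u^2 + u*v + v^2 = 0 := by linear_combination -h/3
        have hu2 : u^2 = 0 := by nlinarith [sq_nonneg (u + 2*v), sq_nonneg u, sq_nonneg v]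
        have hv2 : v^2 = 0 := by nlinarith [sq_nonneg (2*u + v), sq_nonneg u, sq_nonneg v]
        have huv : u = 0 ∧ v = 0 :=
          ⟨pow_eq_zero_iff two_ne_zero |>.mp hu2, pow_eq_zero_iff two_ne_zero |>.mp hv2⟩
        apply hf
        refine ⟨f 0, fun x => ?_⟩
        have hall : ∀ y : ZMod 3, y = 0 ∨ y = 1 ∨ y = 2 := by decide
        have hx := hall x
        obtain ⟨h1, h2⟩ := huv
        rcases hx with rfl | rfl | rfl
        · rfl
        · rw [hu] at h1; linarith
        · rw [hu] at h1; rw [hv] at h2; linarith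
      rw [eq_top_iff]
      rintro g -
      have hF0 : (fun x : ZMod 3 => f (x + ((0:ℤ) : ZMod 3))) ∈
          Submodule.span ℝ ((Set.range fun n : ℤ => fun x : ZMod 3 => f (x + (n : ZMod 3))) ∪
            {fun _ : ZMod 3 => (1 : ℝ)}) := Submodule.subset_span (Or.inl ⟨0, rfl⟩)
      have hF1 : (fun x : ZMod 3 => f (x + ((1:ℤ) : ZMod 3))) ∈
          Submodule.span ℝ ((Set.range fun n : ℤ => fun x : ZMod 3 => f (x + (n : ZMod 3))) ∪
            {fun _ : ZMod 3 => (1 : ℝ)}) := Submodule.subset_span (Or.inl ⟨1, rfl⟩)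
      have hF2 : (fun x : ZMod 3 => f (x + ((2:ℤ) : ZMod 3))) ∈
          Submodule.span ℝ ((Set.range fun n : ℤ => fun x : ZMod 3 => f (x + (n : ZMod 3))) ∪
            {fun _ : ZMod 3 => (1 : ℝ)}) := Submodule.subset_span (Or.inl ⟨2, rfl⟩)
      have hOne : (fun _ : ZMod 3 => (1:ℝ)) ∈
          Submodule.span ℝ ((Set.range fun n : ℤ => fun x : ZMod 3 => f (x + (n : ZMod 3))) ∪
            {fun _ : ZMod 3 => (1 : ℝ)}) := Submodule.subset_span (Or.inr rfl)
      set det : ℝ := (u - v) * (w - u) - (v - w)^2 with hdet'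
      set X : ℝ := ((g 0 - g 1) * (w - u) - (g 1 - g 2) * (v - w)) / det with hX
      set Y : ℝ := ((u - v) * (g 1 - g 2) - (v - w) * (g 0 - g 1)) / det with hY
      set Z : ℝ := (g 0 + g 1 + g 2) / 3 with hZ
      have key : g = X •
            ((fun x : ZMod 3 => f (x + ((0:ℤ) : ZMod 3))) - fun x : ZMod 3 => f (x + ((1:ℤ) : ZMod 3)))
          + Y •
            ((fun x : ZMod 3 => f (x + ((1:ℤ) : ZMod 3))) - fun x : ZMod 3 => f (x + ((2:ℤ) : ZMod 3)))
          + Z • (fun _ : ZMod 3 => (1:ℝ)) := by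
        funext x
        have hall : ∀ y : ZMod 3, y = 0 ∨ y = 1 ∨ y = 2 := by decide
        have hx := hall x
        have e00 : (0 : ZMod 3) + ((0:ℤ) : ZMod 3) = 0 := by decide
        have e01 : (0 : ZMod 3) + ((1:ℤ) : ZMod 3) = 1 := by decide
        have e02 : (0 : ZMod 3) + ((2:ℤ) : ZMod 3) = 2 := by decide
        have e10 : (1 : ZMod 3) + ((0:ℤ) : ZMod 3) = 1 := by decide
        have e11 : (1 : ZMod 3) + ((1:ℤ) : ZMod 3) = 2 := by decide
        have e12 : (1 : ZMod 3) + ((2:ℤ) : ZMod 3) = 0 := by decide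
        have e20 : (2 : ZMod 3) + ((0:ℤ) : ZMod 3) = 2 := by decide
        have e21 : (2 : ZMod 3) + ((1:ℤ) : ZMod 3) = 0 := by decide
        have e22 : (2 : ZMod 3) + ((2:ℤ) : ZMod 3) = 1 := by decide
        rcases hx with rfl | rfl | rfl <;>
          simp only [Pi.add_apply, Pi.smul_apply, Pi.sub_apply, smul_eq_mul,
            e00, e01, e02, e10, e11, e12, e20, e21, e22, hX, hY, hZ, hu, hv, hw] <;>
          field_simp <;> simp only [hdet', hu, hv, hw] <;> ring
      rw [key]
      exact Submodule.add_mem _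
        (Submodule.add_mem _ (Submodule.smul_mem _ _ (Submodule.sub_mem _ hF0 hF1))
          (Submodule.smul_mem _ _ (Submodule.sub_mem _ hF1 hF2)))
        (Submodule.smul_mem _ _ hOne)
end

section
/- Let V be a closed G-invariant linear subspace of C(S¹,ℂ), where G is the group of Möbius transformations preserving the unit disk acting on the circle. If V contains a non-constant function, then V contains either all functions e^{inθ} with n ≥ 0, or all functions e^{-inθ} with n ≥ 0 (or both, in which case V = C(S¹,ℂ)). -/
open Topology Set

/-- The coordinate of a point of the circle has `normSq` equal to `1`. -/
lemma circle_normSq (ζ : Circle) : Complex.normSq (ζ : ℂ) = 1 := by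
  have := ζ.2
  simp [Submonoid.unitSphere, mem_sphere_zero_iff_norm] at this
  simp [Complex.normSq_eq_norm_sq, this]

lemma moeb_key (a c z : ℂ) :
    Complex.normSq (a*z + (starRingEnd ℂ) c) - Complex.normSq (c*z + (starRingEnd ℂ) a)
      = (Complex.normSq a - Complex.normSq c) * (Complex.normSq z - 1) := by
  simp [Complex.normSq_apply, Complex.add_re, Complex.add_im, Complex.mul_re, Complex.mul_im]
  ring

lemma moeb_den_ne (a c : ℂ) (h : Complex.normSq a - Complex.normSq c = 1) (ζ : Circle) :
    c * (ζ:ℂ) + (starRingEnd ℂ) a ≠ 0 := by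
  intro h0
  have hca : Complex.normSq c = Complex.normSq a := by
    have hc : c * (ζ:ℂ) = -(starRingEnd ℂ) a := by linear_combination h0
    have h2 := congrArg Complex.normSq hc
    simpa [Complex.normSq_mul, circle_normSq] using h2
  rw [hca] at h
  simp at h

lemma moeb_normSq_eq (a c : ℂ) (h : Complex.normSq a - Complex.normSq c = 1) (ζ : Circle) :
    Complex.normSq (a*(ζ:ℂ) + (starRingEnd ℂ) c)
      = Complex.normSq (c*(ζ:ℂ) + (starRingEnd ℂ) a) := by
  have hkey := moeb_key a c (ζ:ℂ)
  rw [circle_normSq] at hkey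
  have h0 : (Complex.normSq a - Complex.normSq c) * ((1:ℝ) - 1) = 0 := by ring
  rw [h0] at hkey
  linarith

/-- The Möbius transformation `z ↦ (az + c̄)/(cz + ā)` (with `|a|² - |c|² = 1`)
preserving the unit disc, as a continuous self-map of the unit circle. -/
noncomputable def moeb (a c : ℂ) (h : Complex.normSq a - Complex.normSq c = 1) :
    C(Circle, Circle) where
  toFun ζ := ⟨(a*(ζ:ℂ) + (starRingEnd ℂ) c) / (c*(ζ:ℂ) + (starRingEnd ℂ) a), by
    have hden := moeb_den_ne a c h ζ
    have heq := moeb_normSq_eq a c h ζ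
    have hnorm : ‖(a*(ζ:ℂ) + (starRingEnd ℂ) c) / (c*(ζ:ℂ) + (starRingEnd ℂ) a)‖ = 1 := by
      rw [norm_div, show ‖a*(ζ:ℂ) + (starRingEnd ℂ) c‖ = ‖c*(ζ:ℂ) + (starRingEnd ℂ) a‖ by
        rw [Complex.norm_def, Complex.norm_def, heq]]
      exact div_self (norm_ne_zero_iff.mpr hden)
    exact mem_sphere_zero_iff_norm.mpr hnorm⟩
  continuous_toFun := by
    apply Continuous.subtype_mk
    exact Continuous.div (by fun_prop) (by fun_prop) (fun ζ => moeb_den_ne a c h ζ)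

/-- The character `ζ ↦ ζⁿ = e^{inθ}` on the circle. -/
noncomputable def charPos (n : ℕ) : C(Circle, ℂ) :=
  ⟨fun ζ => ((ζ : ℂ))^n, by fun_prop⟩

/-- The character `ζ ↦ ζ⁻ⁿ = e^{-inθ}` on the circle. -/
noncomputable def charNeg (n : ℕ) : C(Circle, ℂ) :=
  ⟨fun ζ => (((ζ⁻¹ : Circle)) : ℂ)^n,
    (continuous_subtype_val.comp (continuous_inv (G := Circle))).pow n⟩

open Topology Set MeasureTheory

noncomputable instance : MeasurableSpace Circle := borel Circle
instance : BorelSpace Circle := ⟨rfl⟩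

noncomputable def mymu : Measure Circle := Measure.haarMeasure ⊤

instance : IsProbabilityMeasure mymu :=
  ⟨by simpa [mymu] using
    Measure.haarMeasure_self (K₀ := (⊤ : TopologicalSpace.PositiveCompacts Circle))⟩
instance : mymu.IsOpenPosMeasure := by unfold mymu; infer_instance
instance : mymu.IsMulRightInvariant := by unfold mymu; infer_instance

lemma circle_coe_zpow (ζ : Circle) (n : ℤ) : ((ζ ^ n : Circle) : ℂ) = (ζ : ℂ) ^ n := by
  cases n with
  | ofNat m =>
      rw [Int.ofNat_eq_coe, zpow_natCast, zpow_natCast]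
      exact map_pow Circle.coeHom ζ m
  | negSucc m =>
      simp only [zpow_negSucc, Circle.coe_inv, inv_inj]
      exact map_pow Circle.coeHom ζ (m + 1)

/-- The character `ζ ↦ ζⁿ` for `n : ℤ`. -/
noncomputable def char (n : ℤ) : C(Circle, ℂ) :=
  ⟨fun ζ => (ζ : ℂ) ^ n, by
    have : (fun ζ : Circle => (ζ : ℂ) ^ n) = fun ζ : Circle => ((ζ ^ n : Circle) : ℂ) := by
      ext ζ; rw [circle_coe_zpow]
    rw [this]
    exact continuous_subtype_val.comp (continuous_zpow n)⟩

@[simp] lemma char_apply (n : ℤ) (ζ : Circle) : char n ζ = (ζ : ℂ) ^ n := rfl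

lemma charPos_eq (n : ℕ) : charPos n = char n := by
  ext ζ; simp [charPos, char]

lemma charNeg_eq (n : ℕ) : charNeg n = char (-n) := by
  ext ζ
  simp [charNeg, char, zpow_neg, ← inv_pow]

lemma char_mul_char (m k : ℤ) : char m * char k = char (m + k) := by
  ext ζ
  simp [zpow_add₀ ζ.coe_ne_zero]

lemma star_char (n : ℤ) : star (char n) = char (-n) := by
  ext ζ
  have h1 : (starRingEnd ℂ) (ζ:ℂ) = (ζ:ℂ)⁻¹ := (Circle.coe_inv_eq_conj ζ).symm
  simp only [ContinuousMap.star_apply, char_apply]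
  rw [star_zpow₀, Complex.star_def, h1, inv_zpow, zpow_neg]

/-- The span of all characters. -/
noncomputable def charSpan : Submodule ℂ C(Circle, ℂ) := Submodule.span ℂ (Set.range char)

lemma char_mem_charSpan (n : ℤ) : char n ∈ charSpan := Submodule.subset_span ⟨n, rfl⟩

lemma charSpan_one : (1 : C(Circle, ℂ)) ∈ charSpan := by
  have : (1 : C(Circle, ℂ)) = char 0 := by ext ζ; simp
  rw [this]; exact char_mem_charSpan 0

lemma charSpan_mul {f g : C(Circle, ℂ)} (hf : f ∈ charSpan) (hg : g ∈ charSpan) :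
    f * g ∈ charSpan := by
  have h : charSpan * charSpan ≤ charSpan := by
    rw [charSpan, Submodule.span_mul_span]
    apply Submodule.span_le.2
    rintro _ ⟨_, ⟨m, rfl⟩, _, ⟨k, rfl⟩, rfl⟩
    exact Submodule.subset_span ⟨m + k, (char_mul_char m k).symm⟩
  exact h (Submodule.mul_mem_mul hf hg)

lemma charSpan_star {f : C(Circle, ℂ)} (hf : f ∈ charSpan) : star f ∈ charSpan := by
  induction hf using Submodule.span_induction with
  | mem x hx => obtain ⟨n, rfl⟩ := hx; rw [star_char]; exact char_mem_charSpan (-n)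
  | zero => simpa using charSpan.zero_mem
  | add x y _ _ hx hy => rw [star_add]; exact charSpan.add_mem hx hy
  | smul c x _ hx => rw [star_smul]; exact charSpan.smul_mem _ hx

/-- Stone–Weierstrass: the span of characters is dense. -/
lemma charSpan_dense : closure (charSpan : Set C(Circle, ℂ)) = univ := by
  let S : StarSubalgebra ℂ C(Circle, ℂ) :=
    { charSpan.toSubalgebra charSpan_one (fun _ _ => charSpan_mul) with
      star_mem' := charSpan_star }
  have hS : S.SeparatesPoints := by
    intro x y hxy
    refine ⟨_, ⟨char 1, char_mem_charSpan 1, rfl⟩, ?_⟩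
    simp only [char_apply, zpow_one]
    exact fun h => hxy (Circle.ext h)
  have h := ContinuousMap.starSubalgebra_topologicalClosure_eq_top_of_separatesPoints S hS
  have h2 := congrArg (fun A : StarSubalgebra ℂ C(Circle, ℂ) => (A : Set C(Circle, ℂ))) h
  simp [StarSubalgebra.topologicalClosure] at h2
  exact h2

lemma integrable_cont' {E : Type*} [NormedAddCommGroup E] (f : Circle → E) (hf : Continuous f) :
    Integrable f mymu :=
  hf.integrable_of_hasCompactSupport (HasCompactSupport.of_compactSpace f)

/-- Fourier coefficient with respect to Haar measure. -/
noncomputable def coeff (n : ℤ) (f : C(Circle, ℂ)) : ℂ :=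
  ∫ u, ((u ^ (-n) : Circle) : ℂ) * f u ∂mymu

lemma integral_char_eq_zero {k : ℤ} (hk : k ≠ 0) :
    ∫ u : Circle, ((u ^ k : Circle) : ℂ) ∂mymu = 0 := by
  set v : Circle := Circle.exp (Real.pi / k)
  have hv : ((v ^ k : Circle) : ℂ) = -1 := by
    rw [circle_coe_zpow]
    show (Complex.exp _) ^ k = -1
    rw [← Complex.exp_int_mul]
    have h2 : (k : ℂ) * (((Real.pi / k : ℝ) : ℂ) * Complex.I) = (Real.pi : ℂ) * Complex.I := by
      have hk' : (k : ℂ) ≠ 0 := Int.cast_ne_zero.mpr hk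
      push_cast
      field_simp
    rw [h2, Complex.exp_pi_mul_I]
  have hinv := integral_mul_right_eq_self (μ := mymu) (fun u : Circle => ((u ^ k : Circle) : ℂ)) v
  have key : ∫ u : Circle, ((u ^ k : Circle) : ℂ) ∂mymu
      = -∫ u : Circle, ((u ^ k : Circle) : ℂ) ∂mymu := by
    nth_rewrite 1 [← hinv]
    rw [← integral_neg]
    congr 1
    ext u
    show (((u * v) ^ k : Circle) : ℂ) = -((u ^ k : Circle) : ℂ)
    rw [mul_zpow, Circle.coe_mul, hv]
    ring
  linear_combination key / 2

lemma coeff_char (m n : ℤ) : coeff n (char m) = if m = n then 1 else 0 := by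
  have hrw : (fun u : Circle => ((u ^ (-n) : Circle) : ℂ) * (char m) u)
      = fun u : Circle => ((u ^ (m - n) : Circle) : ℂ) := by
    ext u
    rw [char_apply, circle_coe_zpow, circle_coe_zpow, ← zpow_add₀ u.coe_ne_zero]
    ring_nf
  rw [coeff, hrw]
  by_cases h : m = n
  · subst h
    simp
  · rw [if_neg h, integral_char_eq_zero (sub_ne_zero.mpr h)]

lemma coeff_smul (n : ℤ) (c : ℂ) (f : C(Circle, ℂ)) : coeff n (c • f) = c * coeff n f := by
  rw [coeff, coeff, ← integral_const_mul]
  congr 1; ext u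
  simp; ring

lemma coeff_sub (n : ℤ) (f g : C(Circle, ℂ)) : coeff n (f - g) = coeff n f - coeff n g := by
  rw [coeff, coeff, coeff, ← integral_sub]
  · congr 1; ext u; simp; ring
  · exact integrable_cont' _
      ((continuous_subtype_val.comp
        (continuous_zpow (-n) : Continuous fun u : Circle => u ^ (-n))).mul f.continuous)
  · exact integrable_cont' _
      ((continuous_subtype_val.comp
        (continuous_zpow (-n) : Continuous fun u : Circle => u ^ (-n))).mul g.continuous)

/-- Rotation as a continuous self-map of the circle. -/
noncomputable def rotCM (u : Circle) : C(Circle, Circle) :=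
  ⟨fun ζ => u * ζ, continuous_const.mul continuous_id⟩

section V
variable (V : Submodule ℂ C(Circle, ℂ))
  (hVinv : ∀ (a c : ℂ) (h : Complex.normSq a - Complex.normSq c = 1),
      ∀ f ∈ V, f.comp (moeb a c h) ∈ V)

include hVinv in
lemma rot_mem (u : Circle) (f : C(Circle, ℂ)) (hf : f ∈ V) : f.comp (rotCM u) ∈ V := by
  obtain ⟨a, ha⟩ : ∃ a : Circle, a * a = u := by
    refine ⟨Circle.exp ((u : ℂ).arg / 2), ?_⟩
    rw [← Circle.exp_add, show (u:ℂ).arg / 2 + (u:ℂ).arg / 2 = (u:ℂ).arg by ring, Circle.exp_arg]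
  have hns : Complex.normSq (a : ℂ) - Complex.normSq (0 : ℂ) = 1 := by simp
  have hmem := hVinv (a : ℂ) 0 hns f hf
  have heq : f.comp (moeb (a : ℂ) 0 hns) = f.comp (rotCM u) := by
    ext ζ
    show f _ = f _
    congr 1
    ext
    show ((a:ℂ) * ζ + (starRingEnd ℂ) 0) / ((0:ℂ) * ζ + (starRingEnd ℂ) (a:ℂ))
        = ((u * ζ : Circle) : ℂ)
    rw [← ha, ← Circle.coe_inv_eq_conj]
    have hane : (a : ℂ) ≠ 0 := a.coe_ne_zero
    push_cast
    rw [map_zero, add_zero, zero_mul, zero_add]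
    field_simp
  rwa [heq] at hmem

include hVinv in
lemma proj_mem (hVclosed : IsClosed (V : Set C(Circle, ℂ))) (n : ℤ) (f : C(Circle, ℂ))
    (hf : f ∈ V) : coeff n f • char n ∈ V := by
  classical
  set Φ : C(Circle × Circle, ℂ) :=
    ⟨fun p => ((p.1 ^ (-n) : Circle) : ℂ) * f (p.1 * p.2),
      ((continuous_subtype_val.comp
        ((continuous_zpow (-n) : Continuous fun u : Circle => u ^ (-n)).comp continuous_fst)).mul
        (f.continuous.comp (continuous_fst.mul continuous_snd)))⟩ with hΦ
  set F : Circle → C(Circle, ℂ) := fun u => Φ.curry u with hF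
  have hFcont : Continuous F := Φ.curry.continuous
  have hFint : Integrable F mymu := integrable_cont' F hFcont
  have hFmem : ∀ u, F u ∈ (V : Set C(Circle, ℂ)) := by
    intro u
    have hFu : F u = ((u ^ (-n) : Circle) : ℂ) • (f.comp (rotCM u)) := by
      ext ζ
      show Φ (u, ζ) = _
      simp [hΦ, rotCM]
    rw [hFu]
    exact V.smul_mem _ (rot_mem V hVinv u f hf)
  have hVconv : Convex ℝ (V : Set C(Circle, ℂ)) := (V.restrictScalars ℝ).convex
  have hint_mem : (∫ u, F u ∂mymu) ∈ (V : Set C(Circle, ℂ)) :=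
    hVconv.integral_mem hVclosed (Filter.Eventually.of_forall hFmem) hFint
  have key : (∫ u, F u ∂mymu) = coeff n f • char n := by
    ext ζ
    rw [ContinuousMap.integral_apply hFint ζ]
    set g : Circle → ℂ := fun x => ((x ^ (-n) : Circle) : ℂ) * f (x * ζ) with hg
    calc (∫ u, F u ζ ∂mymu) = ∫ x, g (x * ζ⁻¹) ∂mymu := by
          rw [integral_mul_right_eq_self g ζ⁻¹]
          rfl
      _ = ∫ x, ((ζ ^ n : Circle) : ℂ) * (((x ^ (-n) : Circle) : ℂ) * f x) ∂mymu := by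
          congr 1; ext x
          show (((x * ζ⁻¹) ^ (-n) : Circle) : ℂ) * f (x * ζ⁻¹ * ζ) = _
          rw [inv_mul_cancel_right, mul_zpow, Circle.coe_mul]
          have hz : ((ζ⁻¹ ^ (-n) : Circle) : ℂ) = ((ζ ^ n : Circle) : ℂ) := by
            rw [inv_zpow, ← zpow_neg, neg_neg]
          rw [hz]; ring
      _ = ((ζ ^ n : Circle) : ℂ) * coeff n f := integral_const_mul _ _
      _ = (coeff n f • char n) ζ := by
          rw [circle_coe_zpow]
          simp only [ContinuousMap.smul_apply, char_apply, smul_eq_mul]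
          ring
  rw [← key]
  exact hint_mem

end V

lemma eq_const_of_coeff_eq_zero (f : C(Circle, ℂ)) (hc : ∀ n : ℤ, n ≠ 0 → coeff n f = 0) :
    ∀ ζ : Circle, f ζ = coeff 0 f := by
  classical
  set h : C(Circle, ℂ) := f - coeff 0 f • char 0 with hh
  have hcoeff : ∀ n : ℤ, coeff n h = 0 := by
    intro n
    rw [hh, coeff_sub, coeff_smul, coeff_char]
    by_cases hn : n = 0
    · subst hn; simp
    · rw [if_neg (fun he => hn he.symm), hc n hn]; ring
  have hint : ∀ g : C(Circle, ℂ), Integrable (fun u => h u * g u) mymu :=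
    fun g => integrable_cont' _ (h.continuous.mul g.continuous)
  set φ : C(Circle, ℂ) → ℂ := fun g => ∫ u, h u * g u ∂mymu with hφ
  have hφcont : Continuous φ := by
    refine (LipschitzWith.of_dist_le_mul (K := ‖h‖₊) ?_).continuous
    intro g1 g2
    rw [dist_eq_norm, dist_eq_norm]
    have hsub : φ g1 - φ g2 = ∫ u, h u * (g1 - g2) u ∂mymu := by
      show (∫ u, h u * g1 u ∂mymu) - (∫ u, h u * g2 u ∂mymu) = _
      rw [← integral_sub (hint g1) (hint g2)]
      refine integral_congr_ae (Filter.Eventually.of_forall fun u => ?_)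
      simp [mul_sub]
    rw [hsub]
    calc ‖∫ u, h u * (g1 - g2) u ∂mymu‖
        ≤ (‖h‖ * ‖g1 - g2‖) * (mymu univ).toReal := by
          refine norm_integral_le_of_norm_le_const (ae_of_all _ fun u => ?_)
          rw [norm_mul]
          exact mul_le_mul (h.norm_coe_le_norm u) ((g1 - g2).norm_coe_le_norm u)
            (norm_nonneg _) (norm_nonneg _)
      _ = ↑‖h‖₊ * ‖g1 - g2‖ := by simp [coe_nnnorm]
  have hφ0 : ∀ g ∈ charSpan, φ g = 0 := by
    intro g hg
    induction hg using Submodule.span_induction with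
    | mem x hx =>
        obtain ⟨m, rfl⟩ := hx
        have heq : φ (char m) = coeff (-m) h := by
          show (∫ u, h u * (char m) u ∂mymu) = ∫ u, ((u ^ (-(-m)) : Circle) : ℂ) * h u ∂mymu
          refine integral_congr_ae (Filter.Eventually.of_forall fun u => ?_)
          dsimp only
          rw [neg_neg, circle_coe_zpow, char_apply]; ring
        rw [heq, hcoeff]
    | zero => simp [hφ]
    | add x y _ _ ihx ihy =>
        have : φ (x + y) = φ x + φ y := by
          show (∫ u, h u * (x + y) u ∂mymu) = _
          rw [← integral_add (hint x) (hint y)]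
          refine integral_congr_ae (Filter.Eventually.of_forall fun u => ?_)
          simp [mul_add]
        rw [this, ihx, ihy, add_zero]
    | smul c x _ ihx =>
        have : φ (c • x) = c * φ x := by
          show (∫ u, h u * (c • x) u ∂mymu) = c * ∫ u, h u * x u ∂mymu
          rw [← integral_const_mul]
          refine integral_congr_ae (Filter.Eventually.of_forall fun u => ?_)
          simp; ring
        rw [this, ihx, mul_zero]
  have hφstar : φ (star h) = 0 := by
    have hcl : closure (charSpan : Set C(Circle, ℂ)) ⊆ φ ⁻¹' {0} :=
      closure_minimal (fun g hg => hφ0 g hg) (isClosed_singleton.preimage hφcont)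
    have : star h ∈ closure (charSpan : Set C(Circle, ℂ)) := by
      rw [charSpan_dense]; exact mem_univ _
    simpa using hcl this
  have hns : ∫ u, Complex.normSq (h u) ∂mymu = 0 := by
    have h1 : φ (star h) = ∫ u, ((Complex.normSq (h u) : ℝ) : ℂ) ∂mymu := by
      show (∫ u, h u * (star h) u ∂mymu) = _
      refine integral_congr_ae (Filter.Eventually.of_forall fun u => ?_)
      dsimp only
      rw [ContinuousMap.star_apply, Complex.star_def, Complex.mul_conj]
    rw [hφstar] at h1
    have h3 := integral_ofReal (𝕜 := ℂ) (μ := mymu) (f := fun u => Complex.normSq (h u))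
    have h2 : ((∫ u, Complex.normSq (h u) ∂mymu : ℝ) : ℂ) = 0 := h3.symm.trans h1.symm
    exact_mod_cast h2
  have hzero : (fun u : Circle => Complex.normSq (h u)) = fun _ => (0 : ℝ) := by
    have hcont : Continuous fun u : Circle => Complex.normSq (h u) :=
      Complex.continuous_normSq.comp h.continuous
    have hae := (integral_eq_zero_iff_of_nonneg
      (fun u => Complex.normSq_nonneg _) (integrable_cont' _ hcont)).mp hns
    exact (Continuous.ae_eq_iff_eq mymu hcont continuous_const).mp hae
  intro ζ
  have h0 : h ζ = 0 := Complex.normSq_eq_zero.mp (congrFun hzero ζ)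
  have h1 : f ζ - coeff 0 f * (ζ : ℂ) ^ (0 : ℤ) = 0 := by simpa [hh] using h0
  rw [zpow_zero, mul_one] at h1
  linear_combination h1

lemma exists_coeff_ne_zero (f : C(Circle, ℂ)) (hnc : ¬ ∃ w : ℂ, ∀ ζ : Circle, f ζ = w) :
    ∃ n : ℤ, n ≠ 0 ∧ coeff n f ≠ 0 := by
  by_contra hcon
  push_neg at hcon
  exact hnc ⟨coeff 0 f, eq_const_of_coeff_eq_zero f fun n hn => hcon n hn⟩

/-! ### The ladder: moving between adjacent characters -/

abbrev TT : Set ℝ := Set.Icc (-(1/2) : ℝ) (1/2)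

lemma TT_zero : (0 : ℝ) ∈ TT := by constructor <;> norm_num

lemma TT_abs (s : TT) : |(s : ℝ)| ≤ 1/2 := abs_le.mpr ⟨s.2.1, s.2.2⟩

lemma den_ne {t : ℝ} (ht : |t| ≤ 1/2) (ζ : Circle) : (1 : ℂ) + t * ζ ≠ 0 := by
  intro h0
  have h1 : (t : ℂ) * ζ = -1 := by linear_combination h0
  have h2 := congrArg norm h1
  rw [norm_mul, Complex.norm_real, Circle.norm_coe, mul_one] at h2
  simp at h2
  rw [h2] at ht
  norm_num at ht

lemma num_ne {t : ℝ} (ht : |t| ≤ 1/2) (ζ : Circle) : (ζ : ℂ) + t ≠ 0 := by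
  intro h0
  have h1 : (ζ : ℂ) = -t := by linear_combination h0
  have h2 := congrArg norm h1
  rw [Circle.norm_coe] at h2
  simp at h2
  rw [← h2] at ht
  norm_num at ht

/-- The Möbius map value `(ζ+t)/(1+tζ)`. -/
noncomputable def wf (t : ℝ) (ζ : Circle) : ℂ := ((ζ : ℂ) + t) / (1 + t * ζ)

lemma wf_ne {t : ℝ} (ht : |t| ≤ 1/2) (ζ : Circle) : wf t ζ ≠ 0 :=
  div_ne_zero (num_ne ht ζ) (den_ne ht ζ)

lemma wf_zero (ζ : Circle) : wf 0 ζ = (ζ : ℂ) := by simp [wf]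

lemma wf_sub (t : ℝ) (ht : |t| ≤ 1/2) (ζ : Circle) :
    wf t ζ - ζ = (t : ℂ) * ((1 - (ζ:ℂ)^2) / (1 + t * ζ)) := by
  rw [wf]
  have hd := den_ne ht ζ
  generalize (ζ:ℂ) = z at hd ⊢
  rw [mul_div_assoc', eq_div_iff hd, sub_mul, div_mul_cancel₀ _ hd]
  ring

/-- Difference-quotient witness for positive exponents. -/
noncomputable def EposF (m : ℕ) : TT × Circle → ℂ := fun p =>
  ((1 - ((p.2 : ℂ))^2) / (1 + (p.1 : ℝ) * (p.2 : ℂ))) *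
    ∑ j ∈ Finset.range (m+1), (wf p.1 p.2)^j * ((p.2 : ℂ))^(m - j)

lemma cont_t : Continuous fun p : TT × Circle => (((p.1 : ℝ) : ℂ)) :=
  Complex.continuous_ofReal.comp (continuous_subtype_val.comp continuous_fst)

lemma cont_z : Continuous fun p : TT × Circle => ((p.2 : ℂ)) :=
  continuous_subtype_val.comp continuous_snd

lemma cont_den : Continuous fun p : TT × Circle => (1 : ℂ) + (p.1 : ℝ) * (p.2 : ℂ) :=
  continuous_const.add (cont_t.mul cont_z)

lemma cont_wf : Continuous fun p : TT × Circle => wf p.1 p.2 :=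
  (cont_z.add cont_t).div cont_den fun p => den_ne (TT_abs p.1) p.2

lemma EposF_cont (m : ℕ) : Continuous (EposF m) := by
  apply Continuous.mul
  · exact (continuous_const.sub (cont_z.pow 2)).div cont_den fun p => den_ne (TT_abs p.1) p.2
  · exact continuous_finset_sum _ fun j _ => (cont_wf.pow j).mul (cont_z.pow (m - j))

lemma EposF_spec (m : ℕ) (s : TT) (ζ : Circle) :
    ((s : ℝ) : ℂ) * EposF m (s, ζ) = (wf s ζ)^(m+1) - ((ζ:ℂ))^(m+1) := by
  have hgeom := geom_sum₂_mul (wf s ζ) ((ζ:ℂ)) (m+1)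
  have hsub := wf_sub s (TT_abs s) ζ
  rw [EposF]
  have hrw : ∀ j ∈ Finset.range (m+1), (wf s ζ)^j * ((ζ:ℂ))^(m+1-1-j)
      = (wf s ζ)^j * ((ζ:ℂ))^(m - j) := by
    intro j hj
    congr 2
  rw [← hgeom, ← Finset.sum_congr rfl hrw, hsub]
  ring

lemma EposF_zero (m : ℕ) (ζ : Circle) :
    EposF m (⟨0, TT_zero⟩, ζ) = ((m+1 : ℕ) : ℂ) * (((ζ:ℂ))^m - ((ζ:ℂ))^(m+2)) := by
  rw [EposF]
  have hw : wf (((⟨0, TT_zero⟩ : TT)) : ℝ) ζ = (ζ : ℂ) := wf_zero ζ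
  simp only
  rw [hw]
  have hsum : ∑ j ∈ Finset.range (m+1), ((ζ:ℂ))^j * ((ζ:ℂ))^(m - j)
      = ((m+1 : ℕ) : ℂ) * ((ζ:ℂ))^m := by
    rw [Finset.sum_congr rfl fun j hj => ?_]
    · rw [Finset.sum_const, Finset.card_range, nsmul_eq_mul]
    · rw [← pow_add]
      congr 1
      have := Finset.mem_range.mp hj
      omega
  rw [hsum]
  push_cast
  field_simp
  ring

/-- Existence of the Möbius map realizing `wf t`. -/
lemma exists_moeb_wf (s : TT) :
    ∃ (a c : ℂ) (h : Complex.normSq a - Complex.normSq c = 1),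
      ∀ ζ : Circle, ((moeb a c h ζ : ℂ)) = wf s ζ := by
  set t : ℝ := (s : ℝ)
  have ht : |t| ≤ 1/2 := TT_abs s
  have ht2 : (0:ℝ) < 1 - t^2 := by nlinarith [abs_nonneg t, sq_abs t, (abs_le.mp ht).1, (abs_le.mp ht).2]
  set r : ℝ := Real.sqrt (1 - t^2) with hrdef
  have hr0 : 0 < r := Real.sqrt_pos.mpr ht2
  have hr2 : r^2 = 1 - t^2 := Real.sq_sqrt ht2.le
  refine ⟨((r⁻¹ : ℝ) : ℂ), ((t / r : ℝ) : ℂ), ?_, ?_⟩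
  · rw [Complex.normSq_ofReal, Complex.normSq_ofReal]
    field_simp
    nlinarith [hr2]
  · intro ζ
    have hrne : ((r : ℝ) : ℂ) ≠ 0 := by exact_mod_cast hr0.ne'
    have hden2 : ((t / r : ℝ) : ℂ) * ζ + ((r⁻¹ : ℝ) : ℂ) ≠ 0 := by
      intro h0
      apply den_ne ht ζ
      push_cast at h0
      have hfact : (1 : ℂ) + t * ζ = (r:ℂ) * (((t:ℂ) / r) * ζ + ((r:ℂ))⁻¹) := by
        field_simp
        ring
      rw [hfact, h0, mul_zero]
    show (((r⁻¹ : ℝ) : ℂ) * ζ + (starRingEnd ℂ) ((t / r : ℝ) : ℂ))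
        / (((t / r : ℝ) : ℂ) * ζ + (starRingEnd ℂ) ((r⁻¹ : ℝ) : ℂ)) = wf t ζ
    rw [Complex.conj_ofReal, Complex.conj_ofReal, wf, div_eq_div_iff hden2 (den_ne ht ζ)]
    push_cast
    field_simp
    ring

section V2
variable (V : Submodule ℂ C(Circle, ℂ))
  (hVinv : ∀ (a c : ℂ) (h : Complex.normSq a - Complex.normSq c = 1),
      ∀ f ∈ V, f.comp (moeb a c h) ∈ V)

set_option maxHeartbeats 1000000 in
include hVinv in
lemma diff_mem (hVclosed : IsClosed (V : Set C(Circle, ℂ))) (n : ℤ) (hmem : char n ∈ V) :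
    (n : ℂ) • (char (n-1) - char (n+1)) ∈ V := by
  obtain ⟨E, hEcont, hEspec, hEzero⟩ :
      ∃ E : TT × Circle → ℂ, Continuous E ∧
        (∀ (s : TT) (ζ : Circle), ((s : ℝ) : ℂ) * E (s, ζ) = (wf s ζ) ^ n - ((ζ:ℂ)) ^ n) ∧
        (∀ ζ : Circle, E (⟨0, TT_zero⟩, ζ)
          = (n : ℂ) * (((ζ:ℂ)) ^ (n-1) - ((ζ:ℂ)) ^ (n+1))) := by
    cases n with
    | ofNat k =>
      cases k with
      | zero =>
        refine ⟨0, continuous_const, fun s ζ => ?_, fun ζ => ?_⟩ <;>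
          simp only [Int.ofNat_eq_coe, Nat.cast_zero, zpow_zero, Pi.zero_apply, mul_zero,
            sub_self, Int.cast_zero, zero_mul, zero_sub, zero_add] <;> simp
      | succ m =>
        refine ⟨EposF m, EposF_cont m, fun s ζ => ?_, fun ζ => ?_⟩ <;>
          simp only [Int.ofNat_eq_coe]
        · rw [zpow_natCast, zpow_natCast]
          exact EposF_spec m s ζ
        · rw [EposF_zero]
          have h1 : ((m+1 : ℕ) : ℤ) - 1 = ((m : ℕ) : ℤ) := by omega
          have h2 : ((m+1 : ℕ) : ℤ) + 1 = ((m+2 : ℕ) : ℤ) := by omega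
          rw [h1, h2, zpow_natCast, zpow_natCast]
          push_cast
          ring
    | negSucc m =>
      refine ⟨fun p => -(EposF m p) * ((wf p.1 p.2)^(m+1) * ((p.2:ℂ))^(m+1))⁻¹, ?_, ?_, ?_⟩
      · exact ((EposF_cont m).neg).mul (Continuous.inv₀
          ((cont_wf.pow (m+1)).mul (cont_z.pow (m+1)))
          (fun p => mul_ne_zero (pow_ne_zero _ (wf_ne (TT_abs p.1) p.2))
            (pow_ne_zero _ p.2.coe_ne_zero)))
      · intro s ζ
        rw [zpow_negSucc, zpow_negSucc]
        have hspec := EposF_spec m s ζ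
        have hwne : (wf s ζ) ≠ 0 := wf_ne (TT_abs s) ζ
        have hzne : ((ζ:ℂ)) ≠ 0 := ζ.coe_ne_zero
        have key : ((s:ℝ):ℂ) * (-(EposF m (s,ζ)) * ((wf s ζ)^(m+1) * ((ζ:ℂ))^(m+1))⁻¹)
            = -(((s:ℝ):ℂ) * EposF m (s,ζ)) * ((wf s ζ)^(m+1) * ((ζ:ℂ))^(m+1))⁻¹ := by
          ring
        rw [key, hspec]
        field_simp
        ring
      · intro ζ
        have hzne : ((ζ:ℂ)) ≠ 0 := ζ.coe_ne_zero
        show -(EposF m (⟨0, TT_zero⟩, ζ))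
            * ((wf (((⟨0, TT_zero⟩ : TT)) : ℝ) ζ)^(m+1) * ((ζ:ℂ))^(m+1))⁻¹ = _
        rw [EposF_zero, show (((⟨0, TT_zero⟩ : TT)) : ℝ) = 0 from rfl, wf_zero]
        have e1 : (Int.negSucc m) - 1 = -((m+2 : ℕ) : ℤ) := by
          rw [Int.negSucc_eq]; push_cast; ring
        have e2 : (Int.negSucc m) + 1 = -((m : ℕ) : ℤ) := by
          rw [Int.negSucc_eq]; push_cast; ring
        rw [e1, e2, zpow_neg, zpow_neg, zpow_natCast, zpow_natCast, Int.cast_negSucc]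
        field_simp
        ring
  let Φ : C(TT × Circle, ℂ) := ⟨E, hEcont⟩
  let G : C(TT, C(Circle, ℂ)) := Φ.curry
  have hGmem : ∀ s : TT, (s : ℝ) ≠ 0 → G s ∈ V := by
    intro s hs
    obtain ⟨a, c, hns, hpt⟩ := exists_moeb_wf s
    have hcomp := hVinv a c hns (char n) hmem
    have hsne : (((s:ℝ):ℂ)) ≠ 0 := by exact_mod_cast hs
    have hGs : G s = (((s:ℝ):ℂ))⁻¹ • ((char n).comp (moeb a c hns) - char n) := by
      ext ζ
      show E (s, ζ) = (((s:ℝ):ℂ))⁻¹ * ((char n) ((moeb a c hns) ζ) - (char n) ζ)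
      rw [char_apply, char_apply, hpt ζ, ← hEspec s ζ, inv_mul_cancel_left₀ hsne]
    rw [hGs]
    exact V.smul_mem _ (V.sub_mem hcomp hmem)
  have hG0 : G ⟨0, TT_zero⟩ = (n:ℂ) • (char (n-1) - char (n+1)) := by
    ext ζ
    show E (⟨0, TT_zero⟩, ζ) = _
    rw [hEzero ζ]
    simp [char_apply]
  have hseq0 : Filter.Tendsto (fun k : ℕ => (1 : ℝ)/(k+2)) Filter.atTop (𝓝 0) := by
    rw [show (fun k : ℕ => (1:ℝ)/(k+2)) = fun k : ℕ => ((k:ℝ)+2)⁻¹ by funext k; rw [one_div]]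
    exact (Filter.tendsto_atTop_add_const_right _ 2 (tendsto_natCast_atTop_atTop (R := ℝ))).inv_tendsto_atTop
  have hmemT : ∀ k : ℕ, (1:ℝ)/(k+2) ∈ TT := by
    intro k
    constructor
    · have h1 : (0:ℝ) ≤ (1:ℝ)/(k+2) := by positivity
      linarith
    · rw [div_le_div_iff₀ (by positivity) (by norm_num : (0:ℝ) < 2)]
      have := Nat.cast_nonneg (α := ℝ) k
      nlinarith
  have hsub : Filter.Tendsto (fun k : ℕ => (⟨(1:ℝ)/(k+2), hmemT k⟩ : TT)) Filter.atTop
      (𝓝 (⟨0, TT_zero⟩ : TT)) := by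
    rw [tendsto_subtype_rng]
    exact hseq0
  have hGcont : Continuous G := G.continuous
  have hGseq := (hGcont.tendsto _).comp hsub
  have hmemseq : ∀ k : ℕ, G ⟨(1:ℝ)/(k+2), hmemT k⟩ ∈ V := fun k => hGmem _ (by positivity)
  have hlim := hVclosed.mem_of_tendsto hGseq (Filter.Eventually.of_forall hmemseq)
  rwa [hG0] at hlim

end V2

section V3
variable (V : Submodule ℂ C(Circle, ℂ))
  (hVinv : ∀ (a c : ℂ) (h : Complex.normSq a - Complex.normSq c = 1),
      ∀ f ∈ V, f.comp (moeb a c h) ∈ V)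

include hVinv in
lemma char_shift (hVclosed : IsClosed (V : Set C(Circle, ℂ))) (n : ℤ) (hn : n ≠ 0)
    (h : char n ∈ V) : char (n+1) ∈ V ∧ char (n-1) ∈ V := by
  have hnc : (n : ℂ) ≠ 0 := Int.cast_ne_zero.mpr hn
  have h1 : char (n-1) - char (n+1) ∈ V := by
    have hd := diff_mem V hVinv hVclosed n h
    have := V.smul_mem ((n:ℂ))⁻¹ hd
    rwa [smul_smul, inv_mul_cancel₀ hnc, one_smul] at this
  set u : Circle := Circle.exp (Real.pi/4) with hu
  have hu2 : ((u:ℂ))^2 ≠ 1 := by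
    intro hc
    have hexp : ((u:ℂ))^2 = Complex.exp (((Real.pi/2 : ℝ) : ℂ) * Complex.I) := by
      rw [hu, Circle.coe_exp, sq, ← Complex.exp_add]
      congr 1
      push_cast
      ring
    rw [hexp] at hc
    obtain ⟨k, hk⟩ := Complex.exp_eq_one_iff.mp hc
    have him := congrArg Complex.im hk
    simp [Complex.mul_im, Complex.ofReal_re, Complex.ofReal_im] at him
    have hpi := Real.pi_ne_zero
    have : (Real.pi/2 : ℝ) = k * (2 * Real.pi) := by simpa using him
    have h4k : (4 * (k:ℝ)) = 1 := by
      have hx : (4 * (k:ℝ)) * Real.pi = 1 * Real.pi := by linear_combination (-2) * this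
      exact mul_right_cancel₀ hpi hx
    have : ((4 * k : ℤ) : ℝ) = 1 := by push_cast; linarith
    have : (4 * k : ℤ) = 1 := by exact_mod_cast this
    omega
  have h2 := rot_mem V hVinv u _ h1
  have hcomp : (char (n-1) - char (n+1)).comp (rotCM u)
      = ((u:ℂ)^(n-1)) • char (n-1) - ((u:ℂ)^(n+1)) • char (n+1) := by
    ext ζ
    show (char (n-1)) ((rotCM u) ζ) - (char (n+1)) ((rotCM u) ζ) = _
    have hrot : ((rotCM u) ζ : ℂ) = (u:ℂ) * ζ := rfl
    simp only [char_apply, ContinuousMap.sub_apply, ContinuousMap.smul_apply, smul_eq_mul, hrot,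
      mul_zpow]
  rw [hcomp] at h2
  have h3 : ((u:ℂ)^(n-1)) • (char (n-1) - char (n+1)) ∈ V := V.smul_mem _ h1
  set d : ℂ := (u:ℂ)^(n+1) - (u:ℂ)^(n-1) with hd
  have h4 : d • char (n+1) ∈ V := by
    have h5 := V.sub_mem h2 h3
    have heq : (((u:ℂ)^(n-1)) • char (n-1) - ((u:ℂ)^(n+1)) • char (n+1))
        - ((u:ℂ)^(n-1)) • (char (n-1) - char (n+1)) = (-d) • char (n+1) := by
      ext ζ
      simp only [ContinuousMap.sub_apply, ContinuousMap.smul_apply, smul_eq_mul, hd,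
        ContinuousMap.neg_apply]
      ring
    rw [heq] at h5
    have := V.smul_mem (-1 : ℂ) h5
    rwa [smul_smul, show ((-1:ℂ)) * -d = d by ring] at this
  have hdne : d ≠ 0 := by
    rw [hd, sub_ne_zero]
    intro hc
    apply hu2
    have hune : ((u:ℂ)) ≠ 0 := u.coe_ne_zero
    have : (u:ℂ)^(n+1) = (u:ℂ)^(n-1) * (u:ℂ)^2 := by
      rw [← zpow_natCast ((u:ℂ)) 2, ← zpow_add₀ hune]
      congr 1
      omega
    rw [this] at hc
    have := mul_left_cancel₀ (zpow_ne_zero (n-1) hune) (hc.trans (mul_one _).symm)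
    exact this
  have hp1 : char (n+1) ∈ V := by
    have := V.smul_mem d⁻¹ h4
    rwa [smul_smul, inv_mul_cancel₀ hdne, one_smul] at this
  refine ⟨hp1, ?_⟩
  have := V.add_mem h1 hp1
  rwa [sub_add_cancel] at this

include hVinv in
lemma reach_pos (hVclosed : IsClosed (V : Set C(Circle, ℂ))) (n : ℤ) (hn : 0 < n)
    (h : char n ∈ V) : ∀ m : ℕ, char (m : ℤ) ∈ V := by
  have hup : ∀ j : ℕ, char (n + j) ∈ V := by
    intro j
    induction j with
    | zero => simpa using h
    | succ i ih =>
        have hne : n + i ≠ 0 := by omega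
        have := (char_shift V hVinv hVclosed (n+i) hne ih).1
        have heq : (n + i) + 1 = n + (i+1 : ℕ) := by push_cast; ring
        rwa [heq] at this
  have hdown : ∀ j : ℕ, (j : ℤ) ≤ n → char (n - j) ∈ V := by
    intro j
    induction j with
    | zero => intro _; simpa using h
    | succ i ih =>
        intro hle
        have hile : (i : ℤ) ≤ n := by push_cast at hle ⊢; omega
        have hne : n - i ≠ 0 := by push_cast at hle; omega
        have := (char_shift V hVinv hVclosed (n-i) hne (ih hile)).2
        have heq : (n - i) - 1 = n - (i+1 : ℕ) := by push_cast; ring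
        rwa [heq] at this
  intro m
  rcases le_or_gt (m : ℤ) n with hle | hlt
  · have hj : ((n.toNat - m : ℕ) : ℤ) ≤ n := by omega
    have := hdown (n.toNat - m) hj
    have heq : n - ((n.toNat - m : ℕ) : ℤ) = (m : ℤ) := by omega
    rwa [heq] at this
  · have := hup ((m:ℤ) - n).toNat
    have heq : n + (((m:ℤ) - n).toNat : ℤ) = (m : ℤ) := by omega
    rwa [heq] at this

include hVinv in
lemma reach_neg (hVclosed : IsClosed (V : Set C(Circle, ℂ))) (n : ℤ) (hn : n < 0)
    (h : char n ∈ V) : ∀ m : ℕ, char (-(m : ℤ)) ∈ V := by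
  have hdown : ∀ j : ℕ, char (n - j) ∈ V := by
    intro j
    induction j with
    | zero => simpa using h
    | succ i ih =>
        have hne : n - i ≠ 0 := by omega
        have := (char_shift V hVinv hVclosed (n-i) hne ih).2
        have heq : (n - i) - 1 = n - (i+1 : ℕ) := by push_cast; ring
        rwa [heq] at this
  have hup : ∀ j : ℕ, (j : ℤ) ≤ -n → char (n + j) ∈ V := by
    intro j
    induction j with
    | zero => intro _; simpa using h
    | succ i ih =>
        intro hle
        have hile : (i : ℤ) ≤ -n := by push_cast at hle ⊢; omega
        have hne : n + i ≠ 0 := by push_cast at hle; omega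
        have := (char_shift V hVinv hVclosed (n+i) hne (ih hile)).1
        have heq : (n + i) + 1 = n + (i+1 : ℕ) := by push_cast; ring
        rwa [heq] at this
  intro m
  rcases le_or_gt n (-(m : ℤ)) with hle | hlt
  · have hj : (((-(m:ℤ) - n).toNat : ℕ) : ℤ) ≤ -n := by omega
    have := hup (-(m:ℤ) - n).toNat hj
    have heq : n + (((-(m:ℤ) - n).toNat : ℕ) : ℤ) = -(m : ℤ) := by omega
    rwa [heq] at this
  · have := hdown (n + (m:ℤ)).toNat
    have heq : n - (((n + (m:ℤ)).toNat : ℕ) : ℤ) = -(m : ℤ) := by omega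
    rwa [heq] at this

end V3

/-- A closed subspace of `C(S¹,ℂ)` invariant under the Möbius group of the disc and
containing a non-constant function contains all `e^{inθ}, n ≥ 0`, or all
`e^{-inθ}, n ≥ 0`; and if it contains both families it is everything. -/
theorem closed_moebius_invariant_subspace_contains_characters
    (V : Submodule ℂ C(Circle, ℂ)) (hVclosed : IsClosed (V : Set C(Circle, ℂ)))
    (hVinv : ∀ (a c : ℂ) (h : Complex.normSq a - Complex.normSq c = 1),
      ∀ f ∈ V, f.comp (moeb a c h) ∈ V)
    (hVnonconst : ∃ f ∈ V, ¬ ∃ w : ℂ, ∀ ζ : Circle, f ζ = w) :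
    ((∀ n : ℕ, charPos n ∈ V) ∨ (∀ n : ℕ, charNeg n ∈ V)) ∧
    (((∀ n : ℕ, charPos n ∈ V) ∧ (∀ n : ℕ, charNeg n ∈ V)) → V = ⊤) := by
  constructor
  · obtain ⟨f, hfV, hnc⟩ := hVnonconst
    obtain ⟨n, hn0, hcn⟩ := exists_coeff_ne_zero f hnc
    have hchar : char n ∈ V := by
      have hp := proj_mem V hVinv hVclosed n f hfV
      have := V.smul_mem (coeff n f)⁻¹ hp
      rwa [smul_smul, inv_mul_cancel₀ hcn, one_smul] at this
    rcases lt_or_gt_of_ne hn0 with hneg | hpos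
    · right
      intro m
      rw [charNeg_eq]
      exact reach_neg V hVinv hVclosed n hneg hchar m
    · left
      intro m
      rw [charPos_eq]
      exact reach_pos V hVinv hVclosed n hpos hchar m
  · rintro ⟨hP, hN⟩
    have hall : ∀ n : ℤ, char n ∈ V := by
      intro n
      cases n with
      | ofNat m =>
          have := hP m
          rw [charPos_eq] at this
          exact this
      | negSucc m =>
          have := hN (m+1)
          rw [charNeg_eq] at this
          have heq : (-(((m+1) : ℕ) : ℤ)) = Int.negSucc m := by
            rw [Int.negSucc_eq]; push_cast; ring
          rwa [heq] at this
    have hspan : (charSpan : Set C(Circle, ℂ)) ⊆ (V : Set C(Circle, ℂ)) :=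
      Submodule.span_le.mpr (by rintro _ ⟨n, rfl⟩; exact hall n)
    have huniv : (univ : Set C(Circle, ℂ)) ⊆ (V : Set C(Circle, ℂ)) := by
      rw [← charSpan_dense]
      exact closure_minimal hspan hVclosed
    rw [eq_top_iff]
    intro g _
    exact huniv (mem_univ g)
end
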